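/- arXiv:1602.01720 — 11 statements merged into one kernel-verified Lean document; each statement's English description precedes it below -/
import Mathlib

section
/- Let Av = −f v + c v′ + d v″ denote the local part of L#. Then for every h ∈ C²_c(ℝ): ∫ A(h û_x)(x) · h(x)û_x(x) · ρ(x) dx = −(1/2) ∫ h² (Pû_x) ψ dx − d ∫ (h′)² û_x ψ dx − (1/2) ∫ h² û_x (P*ψ) dx. -/
open MeasureTheory Filter

/-- The nonlocal part `Pv(x) = r(x) (w ∗ (q v))(x)` of the frozen wave operator. -/
noncomputable def Pnl (r q w v : ℝ → ℝ) : ℝ → ℝ :=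
  fun x => r x * ∫ y, w (x - y) * q y * v y

/-- Its adjoint `P*v(x) = q(x) ∫ w(y−x) r(y) v(y) dy`. -/
noncomputable def PnlStar (r q w v : ℝ → ℝ) : ℝ → ℝ :=
  fun x => q x * ∫ y, w (y - x) * r y * v y

/-- The frozen wave operator `L# v = −f v + c v′ + d v″ + P v`. -/
noncomputable def LFW (c d : ℝ) (f r q w v : ℝ → ℝ) : ℝ → ℝ :=
  fun x => -(f x) * v x + c * deriv v x + d * deriv (deriv v) x + Pnl r q w v x

/-- The adjoint frozen wave operator `L#* v = −f v − c v′ + d v″ + P* v`. -/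
noncomputable def LFWStar (c d : ℝ) (f r q w v : ℝ → ℝ) : ℝ → ℝ :=
  fun x => -(f x) * v x - c * deriv v x + d * deriv (deriv v) x + PnlStar r q w v x

/-- The local part `Av = −f v + c v′ + d v″` of the frozen wave operator. -/
noncomputable def Aloc (c d : ℝ) (f v : ℝ → ℝ) : ℝ → ℝ :=
  fun x => -(f x) * v x + c * deriv v x + d * deriv (deriv v) x

private lemma c2_facts {g : ℝ → ℝ} (hg : ContDiff ℝ 2 g) :
    Differentiable ℝ g ∧ Differentiable ℝ (deriv g) ∧ Continuous (deriv (deriv g)) := by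
  have h2 : ContDiff ℝ (1 + 1) g := by norm_num at hg ⊢; exact hg
  rw [contDiff_succ_iff_deriv] at h2
  exact ⟨h2.1, (contDiff_one_iff_deriv.mp h2.2.2).1, (contDiff_one_iff_deriv.mp h2.2.2).2⟩

private lemma hcs_sq {h g : ℝ → ℝ} (hh : HasCompactSupport h) :
    HasCompactSupport (fun x => h x ^ 2 * g x) := by
  have : (fun x => h x ^ 2 * g x) = h * (h * g) := funext fun x => by
    simp only [Pi.mul_apply]; ring
  rw [this]
  exact hh.mul_right

/-- Representation (2.1) of the local energy as a sum of squares: for `h ∈ C²_c(ℝ)`,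
`∫ A(h û_x) h û_x ρ dx = −½∫ h² (Pû_x) ψ dx − d ∫ (h′)² û_x ψ dx − ½∫ h² û_x (P*ψ) dx`. -/
theorem stmt_4
    (c d : ℝ) (hd : 0 ≤ d)
    (f r q : ℝ → ℝ)
    (hf_cont : Continuous f) (hr_cont : Continuous r) (hq_cont : Continuous q)
    (hf_bdd : ∃ C, ∀ x, |f x| ≤ C) (hr_bdd : ∃ C, ∀ x, |r x| ≤ C)
    (hq_bdd : ∃ C, ∀ x, |q x| ≤ C)
    (hr_inf : ∃ ε > 0, ∀ x, ε ≤ r x) (hq_inf : ∃ ε > 0, ∀ x, ε ≤ q x)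
    (w : ℝ → ℝ) (hw_meas : Measurable w) (hw_nonneg : ∀ x, 0 ≤ w x)
    (hw_int : Integrable w) (hw_prob : (∫ x, w x) = 1)
    (w' : ℝ → ℝ) (hw_diff : ∀ᵐ x ∂(volume : Measure ℝ), HasDerivAt w (w' x) x)
    (hw'_int : Integrable w')
    (u ψ : ℝ → ℝ)
    (hu_C2 : ContDiff ℝ 2 u) (hu_pos : ∀ x, 0 < u x)
    (hu_L2 : MemLp u 2 volume) (hu'_L2 : MemLp (deriv u) 2 volume)
    (hu''_L2 : MemLp (deriv (deriv u)) 2 volume)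
    (hu_eig : ∀ x, LFW c d f r q w u x = 0)
    (hψ_C2 : ContDiff ℝ 2 ψ) (hψ_pos : ∀ x, 0 < ψ x)
    (hψ_L2 : MemLp ψ 2 volume) (hψ'_L2 : MemLp (deriv ψ) 2 volume)
    (hψ''_L2 : MemLp (deriv (deriv ψ)) 2 volume)
    (hψ_eig : ∀ x, LFWStar c d f r q w ψ x = 0)
    (hnorm : (∫ x, u x * ψ x) = 1) :
    ∀ h : ℝ → ℝ, ContDiff ℝ 2 h → HasCompactSupport h →
      (∫ x, Aloc c d f (fun t => h t * u t) x * (h x * u x) * (ψ x / u x)) =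
        -(1 / 2) * (∫ x, (h x) ^ 2 * (Pnl r q w u x * ψ x))
          - d * (∫ x, (deriv h x) ^ 2 * (u x * ψ x))
          - 1 / 2 * (∫ x, (h x) ^ 2 * (u x * PnlStar r q w ψ x)) := by
  intro h hh_C2 hsupp
  obtain ⟨hu1, hu'1, hu''c⟩ := c2_facts hu_C2
  obtain ⟨hψ1, hψ'1, hψ''c⟩ := c2_facts hψ_C2
  obtain ⟨hh1, hh'1, hh''c⟩ := c2_facts hh_C2
  have huc : Continuous u := hu1.continuous
  have hu'c : Continuous (deriv u) := hu'1.continuous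
  have hψc : Continuous ψ := hψ1.continuous
  have hψ'c : Continuous (deriv ψ) := hψ'1.continuous
  have hhc : Continuous h := hh1.continuous
  have hh'c : Continuous (deriv h) := hh'1.continuous
  -- eigen identities
  have hPu : ∀ x, Pnl r q w u x
      = f x * u x - c * deriv u x - d * deriv (deriv u) x := by
    intro x; have := hu_eig x; simp only [LFW] at this; linarith
  have hPψ : ∀ x, PnlStar r q w ψ x
      = f x * ψ x + c * deriv ψ x - d * deriv (deriv ψ) x := by
    intro x; have := hψ_eig x; simp only [LFWStar] at this; linarith
  -- derivative formulas for h * u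
  have e1 : deriv (fun t => h t * u t) = fun x => deriv h x * u x + h x * deriv u x :=
    funext fun x => deriv_mul (hh1 x) (hu1 x)
  have e2 : ∀ x, deriv (fun y => deriv h y * u y + h y * deriv u y) x
      = deriv (deriv h) x * u x + 2 * (deriv h x * deriv u x) + h x * deriv (deriv u) x := by
    intro x
    rw [deriv_fun_add (f := fun y => deriv h y * u y) (g := fun y => h y * deriv u y) ((hh'1 x).mul (hu1 x)) ((hh1 x).mul (hu'1 x)),
      deriv_fun_mul (hh'1 x) (hu1 x), deriv_fun_mul (hh1 x) (hu'1 x)]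
    ring
  -- exact-derivative part
  set φ : ℝ → ℝ := fun x =>
    c * (h x * deriv h x * u x * ψ x + h x ^ 2 * deriv u x * ψ x / 2
        + h x ^ 2 * u x * deriv ψ x / 2)
      + d * (deriv h x ^ 2 * u x * ψ x + h x * deriv (deriv h) x * u x * ψ x
        + 2 * (h x * deriv h x * deriv u x * ψ x) + h x ^ 2 * deriv (deriv u) x * ψ x / 2
        - h x ^ 2 * u x * deriv (deriv ψ) x / 2) with hφ
  set F : ℝ → ℝ := fun x =>
    c / 2 * (h x ^ 2 * u x * ψ x)
      + d * (h x * deriv h x * u x * ψ x + 1 / 2 * (h x ^ 2 * deriv u x * ψ x)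
        - 1 / 2 * (h x ^ 2 * u x * deriv ψ x)) with hFdef
  have hF : ∀ x, HasDerivAt F (φ x) x := by
    intro x
    have Hh : HasDerivAt h (deriv h x) x := (hh1 x).hasDerivAt
    have Hh' : HasDerivAt (deriv h) (deriv (deriv h) x) x := (hh'1 x).hasDerivAt
    have Hu : HasDerivAt u (deriv u x) x := (hu1 x).hasDerivAt
    have Hu' : HasDerivAt (deriv u) (deriv (deriv u) x) x := (hu'1 x).hasDerivAt
    have Hψ : HasDerivAt ψ (deriv ψ x) x := (hψ1 x).hasDerivAt
    have Hψ' : HasDerivAt (deriv ψ) (deriv (deriv ψ) x) x := (hψ'1 x).hasDerivAt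
    have T1 := (((Hh.pow 2).mul Hu).mul Hψ).const_mul (c / 2)
    have T2 := ((Hh.mul Hh').mul Hu).mul Hψ
    have T3 := (((Hh.pow 2).mul Hu').mul Hψ).const_mul (1 / 2 : ℝ)
    have T4 := (((Hh.pow 2).mul Hu).mul Hψ').const_mul (1 / 2 : ℝ)
    have H := T1.add (((T2.add T3).sub T4).const_mul d)
    have H' : HasDerivAt F _ x := H
    convert H' using 1
    simp only [hφ, Pi.mul_apply, Pi.pow_apply]
    ring
  have hderivF : deriv F = φ := funext fun x => (hF x).deriv
  have hFcs : HasCompactSupport F := by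
    have hfac : F = h * fun x =>
        c / 2 * (h x * u x * ψ x)
          + d * (deriv h x * u x * ψ x + 1 / 2 * (h x * deriv u x * ψ x)
            - 1 / 2 * (h x * u x * deriv ψ x)) := funext fun x => by
      simp only [hFdef, Pi.mul_apply]; ring
    rw [hfac]
    exact hsupp.mul_right
  have hφcs : HasCompactSupport φ := hderivF ▸ hFcs.deriv
  have hφcont : Continuous φ := by
    simp only [hφ]
    fun_prop
  have hφint : Integrable φ := hφcont.integrable_of_hasCompactSupport hφcs
  have hFC1 : ContDiff ℝ 1 F := by
    rw [contDiff_one_iff_deriv, hderivF]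
    exact ⟨fun x => (hF x).differentiableAt, hφcont⟩
  have hφ0 : (∫ x, φ x) = 0 := by
    have hs := intervalIntegral.integral_Iic_add_Ioi (b := (0:ℝ))
      hφint.integrableOn hφint.integrableOn
    have hL : (∫ x in Set.Iic (0:ℝ), φ x) = F 0 := by
      rw [← hderivF]; exact HasCompactSupport.integral_Iic_deriv_eq hFC1 hFcs 0
    have hR : (∫ x in Set.Ioi (0:ℝ), φ x) = -F 0 := by
      rw [← hderivF]; exact HasCompactSupport.integral_Ioi_deriv_eq hFC1 hFcs 0
    rw [← hs, hL, hR]; ring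
  -- integrability of the three RHS integrands
  have hAint : Integrable (fun x =>
      h x ^ 2 * ((f x * u x - c * deriv u x - d * deriv (deriv u) x) * ψ x)) :=
    (by fun_prop : Continuous (fun x =>
      h x ^ 2 * ((f x * u x - c * deriv u x - d * deriv (deriv u) x) * ψ x)))
      |>.integrable_of_hasCompactSupport (hcs_sq hsupp)
  have hBint : Integrable (fun x => deriv h x ^ 2 * (u x * ψ x)) :=
    (by fun_prop : Continuous (fun x => deriv h x ^ 2 * (u x * ψ x)))
      |>.integrable_of_hasCompactSupport (hcs_sq hsupp.deriv)
  have hCint : Integrable (fun x =>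
      h x ^ 2 * (u x * (f x * ψ x + c * deriv ψ x - d * deriv (deriv ψ) x))) :=
    (by fun_prop : Continuous (fun x =>
      h x ^ 2 * (u x * (f x * ψ x + c * deriv ψ x - d * deriv (deriv ψ) x))))
      |>.integrable_of_hasCompactSupport (hcs_sq hsupp)
  have ha2 : Integrable (fun x =>
      -(1/2) * (h x ^ 2 * ((f x * u x - c * deriv u x - d * deriv (deriv u) x) * ψ x))) :=
    hAint.const_mul _
  have hb2 : Integrable (fun x => d * (deriv h x ^ 2 * (u x * ψ x))) := hBint.const_mul _
  have hc2 : Integrable (fun x =>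
      1/2 * (h x ^ 2 * (u x * (f x * ψ x + c * deriv ψ x - d * deriv (deriv ψ) x)))) :=
    hCint.const_mul _
  have hab : Integrable (fun x =>
      -(1/2) * (h x ^ 2 * ((f x * u x - c * deriv u x - d * deriv (deriv u) x) * ψ x))
        - d * (deriv h x ^ 2 * (u x * ψ x))) := ha2.sub hb2
  have hEint : Integrable (fun x =>
      -(1/2) * (h x ^ 2 * ((f x * u x - c * deriv u x - d * deriv (deriv u) x) * ψ x))
        - d * (deriv h x ^ 2 * (u x * ψ x))
        - 1/2 * (h x ^ 2 * (u x * (f x * ψ x + c * deriv ψ x - d * deriv (deriv ψ) x)))) :=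
    hab.sub hc2
  have step1 : (∫ x, Aloc c d f (fun t => h t * u t) x * (h x * u x) * (ψ x / u x))
      = ∫ x, ((-(1/2) * (h x ^ 2 * ((f x * u x - c * deriv u x - d * deriv (deriv u) x) * ψ x))
          - d * (deriv h x ^ 2 * (u x * ψ x))
          - 1/2 * (h x ^ 2 * (u x * (f x * ψ x + c * deriv ψ x - d * deriv (deriv ψ) x))))
          + φ x) := by
    refine integral_congr_ae (Filter.Eventually.of_forall fun x => ?_)
    have hux : u x ≠ 0 := (hu_pos x).ne'
    simp only [Aloc, e1, e2, hφ]
    field_simp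
    ring
  simp only [hPu, hPψ]
  rw [step1, integral_add hEint hφint, hφ0, add_zero, integral_sub hab hc2,
    integral_sub ha2 hb2, integral_const_mul, integral_const_mul, integral_const_mul]
end

section
/- Assume that w > 0 on a neighborhood of 0, that û_x is three times differentiable, and that m := sup_x |û_x″(x)/û_x(x)| < ∞ and m₃ := sup_x |û_x‴(x)/û_x(x)| < ∞. Then for all x ∈ ℝ: δ₁ û_x(x) ≤ Pû_x(x) ≤ δ₂ û_x(x), where δ₁ = (inf r)(inf q) ∫_{−∞}^0 w(y) e^{m y} dy > 0 and δ₂ = ‖f‖_∞ + |c| m + d m₃. -/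
open MeasureTheory Filter Set

/-- Step (I) of the proof of Theorem 3.4: if `w > 0` near `0`, `û_x` is three times
differentiable with `|û_x′| ≤ m û_x` and `|û_x″| ≤ m₃ û_x` (the bounds
`‖û_xx/û_x‖_∞ ≤ m`, `‖û_xxx/û_x‖_∞ ≤ m₃` of the paper), then
`δ₁ û_x ≤ Pû_x ≤ δ₂ û_x` with `δ₁ = (inf r)(inf q) ∫_{−∞}^0 w(y) e^{m y} dy > 0`
and `δ₂ = ‖f‖_∞ + |c| m + d m₃`. -/
theorem stmt_6
    (c d : ℝ) (hd : 0 ≤ d)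
    (f r q : ℝ → ℝ)
    (hf_cont : Continuous f) (hr_cont : Continuous r) (hq_cont : Continuous q)
    (F : ℝ) (hF : ∀ x, |f x| ≤ F)
    (r₀ q₀ : ℝ) (hr₀ : 0 < r₀) (hq₀ : 0 < q₀)
    (hr : ∀ x, r₀ ≤ r x) (hq : ∀ x, q₀ ≤ q x)
    (hr_bdd : ∃ C, ∀ x, |r x| ≤ C) (hq_bdd : ∃ C, ∀ x, |q x| ≤ C)
    (w : ℝ → ℝ) (hw_meas : Measurable w) (hw_nonneg : ∀ x, 0 ≤ w x)
    (hw_int : Integrable w) (hw_prob : (∫ x, w x) = 1)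
    (hw_pos0 : ∃ ε > 0, ∀ x : ℝ, |x| < ε → 0 < w x)
    (u : ℝ → ℝ) (hu_pos : ∀ x, 0 < u x)
    (hu_L2 : MemLp u 2 volume) (hu'_L2 : MemLp (deriv u) 2 volume)
    (hu''_L2 : MemLp (deriv (deriv u)) 2 volume)
    (hu_d1 : Differentiable ℝ u) (hu_d2 : Differentiable ℝ (deriv u))
    (hu_d3 : Differentiable ℝ (deriv (deriv u)))
    (m m₃ : ℝ) (hm_nonneg : 0 ≤ m) (hm₃_nonneg : 0 ≤ m₃)
    (hm : ∀ x, |deriv u x| ≤ m * u x)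
    (hm₃ : ∀ x, |deriv (deriv u) x| ≤ m₃ * u x)
    (hu_eig : ∀ x, -(f x) * u x + c * deriv u x + d * deriv (deriv u) x
      + Pnl r q w u x = 0) :
    0 < r₀ * q₀ * ∫ y in Iio (0 : ℝ), w y * Real.exp (m * y) ∧
    ∀ x, (r₀ * q₀ * ∫ y in Iio (0 : ℝ), w y * Real.exp (m * y)) * u x ≤ Pnl r q w u x ∧
      Pnl r q w u x ≤ (F + |c| * m + d * m₃) * u x := by
  obtain ⟨ε, hε, hwε⟩ := hw_pos0
  obtain ⟨Cq, hCq⟩ := hq_bdd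
  have hu_cont : Continuous u := hu_d1.continuous
  -- log-Lipschitz estimate
  have hlog : ∀ x y : ℝ, |Real.log (u y) - Real.log (u x)| ≤ m * |y - x| := by
    intro x y
    have hdiff : ∀ z ∈ (univ : Set ℝ), DifferentiableAt ℝ (fun t => Real.log (u t)) z :=
      fun z _ => (((hu_d1 z).hasDerivAt.log (hu_pos z).ne')).differentiableAt
    have hbound : ∀ z ∈ (univ : Set ℝ), ‖deriv (fun t => Real.log (u t)) z‖ ≤ m := by
      intro z _
      rw [((hu_d1 z).hasDerivAt.log (hu_pos z).ne').deriv, Real.norm_eq_abs, abs_div,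
        abs_of_pos (hu_pos z), div_le_iff₀ (hu_pos z)]
      exact hm z
    simpa [Real.norm_eq_abs] using
      Convex.norm_image_sub_le_of_norm_deriv_le hdiff hbound convex_univ
        (mem_univ x) (mem_univ y)
  -- comparison u y ≥ u x e^{-m|y-x|}
  have hcmp : ∀ x y : ℝ, u x * Real.exp (-(m * |y - x|)) ≤ u y := by
    intro x y
    have h1 : Real.log (u x) - m * |y - x| ≤ Real.log (u y) := by
      have := (abs_le.mp (hlog x y)).1
      linarith
    calc u x * Real.exp (-(m * |y - x|))
        = Real.exp (Real.log (u x) + -(m * |y - x|)) := by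
          rw [Real.exp_add, Real.exp_log (hu_pos x)]
      _ ≤ Real.exp (Real.log (u y)) := Real.exp_le_exp.mpr (by linarith)
      _ = u y := Real.exp_log (hu_pos y)
  -- u is bounded
  have hu_sq : Integrable (fun y => u y ^ 2) := hu_L2.integrable_sq
  set I2 := ∫ y, u y ^ 2 with hI2
  set U := Real.exp m * Real.sqrt I2 with hUdef
  have hU : ∀ x, u x ≤ U := by
    intro x
    have hsub : ∀ y ∈ Ioc x (x + 1), (u x * Real.exp (-m)) ^ 2 ≤ u y ^ 2 := by
      intro y hy
      have habs : |y - x| ≤ 1 := by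
        rw [abs_of_pos (sub_pos.mpr hy.1)]; linarith [hy.2]
      have hle : Real.exp (-m) ≤ Real.exp (-(m * |y - x|)) := by
        apply Real.exp_le_exp.mpr
        nlinarith [abs_nonneg (y - x)]
      have h1 : u x * Real.exp (-m) ≤ u y :=
        le_trans (mul_le_mul_of_nonneg_left hle (hu_pos x).le) (hcmp x y)
      exact pow_le_pow_left₀ (mul_pos (hu_pos x) (Real.exp_pos _)).le h1 2
    have h1 : ∫ _y in Ioc x (x + 1), (u x * Real.exp (-m)) ^ 2 ≤ ∫ y in Ioc x (x + 1), u y ^ 2 :=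
      setIntegral_mono_on (integrableOn_const measure_Ioc_lt_top.ne)
        hu_sq.integrableOn measurableSet_Ioc hsub
    have h2 : ∫ y in Ioc x (x + 1), u y ^ 2 ≤ I2 :=
      setIntegral_le_integral hu_sq (Eventually.of_forall fun y => sq_nonneg _)
    have h3 : ∫ _y in Ioc x (x + 1), (u x * Real.exp (-m)) ^ 2 = (u x * Real.exp (-m)) ^ 2 := by
      rw [setIntegral_const, Real.volume_real_Ioc]
      simp [show x + 1 - x = (1 : ℝ) by ring]
    have key : (u x * Real.exp (-m)) ^ 2 ≤ I2 := by rw [← h3]; linarith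
    have h4 : u x * Real.exp (-m) ≤ Real.sqrt I2 := by
      have := Real.sqrt_le_sqrt key
      rwa [Real.sqrt_sq (mul_pos (hu_pos x) (Real.exp_pos _)).le] at this
    have h5 : u x = (u x * Real.exp (-m)) * Real.exp m := by
      rw [mul_assoc, ← Real.exp_add]; simp
    calc u x = (u x * Real.exp (-m)) * Real.exp m := h5
      _ ≤ Real.sqrt I2 * Real.exp m := mul_le_mul_of_nonneg_right h4 (Real.exp_pos m).le
      _ = U := mul_comm _ _
  -- integrability facts
  have hint_main : ∀ x : ℝ, Integrable (fun y => w (x - y) * q y * u y) := by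
    intro x
    have heq : (fun y => w (x - y) * q y * u y) = fun y => (q y * u y) * w (x - y) := by
      funext y; ring
    rw [heq]
    refine (hw_int.comp_sub_left x).bdd_mul (hq_cont.mul hu_cont).aestronglyMeasurable
      (c := Cq * U) (Eventually.of_forall fun y => ?_)
    rw [Real.norm_eq_abs, abs_mul, abs_of_pos (hu_pos y)]
    exact mul_le_mul (hCq y) (hU y) (hu_pos y).le ((abs_nonneg _).trans (hCq y))
  have hwu_int : ∀ x : ℝ, Integrable (fun y => w (x - y) * u y) := by
    intro x
    have heq : (fun y => w (x - y) * u y) = fun y => u y * w (x - y) := by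
      funext y; ring
    rw [heq]
    refine (hw_int.comp_sub_left x).bdd_mul hu_cont.aestronglyMeasurable (c := U) (Eventually.of_forall fun y => ?_)
    rw [Real.norm_eq_abs, abs_of_pos (hu_pos y)]
    exact hU y
  have hδ_int : IntegrableOn (fun z => w z * Real.exp (m * z)) (Iio (0 : ℝ)) := by
    refine Integrable.mono' hw_int.restrict
      ((hw_meas.mul (Real.measurable_exp.comp (measurable_const.mul measurable_id))).aestronglyMeasurable.restrict)
      ((ae_restrict_iff' measurableSet_Iio).mpr (Eventually.of_forall fun z hz => ?_))
    have hz0 : z < 0 := hz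
    have he : Real.exp (m * z) ≤ 1 := Real.exp_le_one_iff.mpr (by nlinarith)
    rw [Real.norm_eq_abs, abs_of_nonneg (mul_nonneg (hw_nonneg z) (Real.exp_pos _).le)]
    nlinarith [hw_nonneg z, Real.exp_pos (m * z)]
  -- positivity of δ
  have hδ_pos : 0 < ∫ z in Iio (0 : ℝ), w z * Real.exp (m * z) := by
    rw [setIntegral_pos_iff_support_of_nonneg_ae
      (Eventually.of_forall fun z => mul_nonneg (hw_nonneg z) (Real.exp_pos _).le) hδ_int]
    have hsubset : Ioo (-ε) 0 ⊆ Function.support (fun z => w z * Real.exp (m * z)) ∩ Iio 0 := by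
      intro z hz
      refine ⟨?_, hz.2⟩
      have hwz : 0 < w z := hwε z (abs_lt.mpr ⟨hz.1, lt_trans hz.2 hε⟩)
      exact (mul_pos hwz (Real.exp_pos _)).ne'
    calc (0 : ENNReal) < ENNReal.ofReal ε := ENNReal.ofReal_pos.mpr hε
      _ = volume (Ioo (-ε) 0) := by rw [Real.volume_Ioo]; norm_num
      _ ≤ _ := measure_mono hsubset
  -- the key lower bound for the convolution
  have hconv_low : ∀ x : ℝ,
      (∫ z in Iio (0 : ℝ), w z * Real.exp (m * z)) * u x ≤ ∫ y, w (x - y) * u y := by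
    intro x
    have hemb : MeasurableEmbedding (fun y : ℝ => x - y) :=
      (Homeomorph.subLeft x).measurableEmbedding
    have hmp := Measure.measurePreserving_sub_left volume x
    have hpre : (fun y : ℝ => x - y) ⁻¹' Iio 0 = Ioi x := by
      ext y; simp [sub_neg]
    have hchg : ∫ y in Ioi x, w (x - y) * Real.exp (m * (x - y))
        = ∫ z in Iio (0 : ℝ), w z * Real.exp (m * z) := by
      rw [← hpre, hmp.setIntegral_preimage_emb hemb (fun z => w z * Real.exp (m * z)) (Iio 0)]
    have hms : Measurable (fun y : ℝ => w (x - y) * Real.exp (m * (x - y)) * u x) :=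
      (((hw_meas.comp (measurable_const.sub measurable_id)).mul
        (Real.measurable_exp.comp
          (measurable_const.mul (measurable_const.sub measurable_id)))).mul measurable_const)
    have hint1 : IntegrableOn (fun y => w (x - y) * Real.exp (m * (x - y)) * u x) (Ioi x) := by
      refine Integrable.mono' (((hw_int.comp_sub_left x).const_mul (u x)).restrict)
        hms.aestronglyMeasurable.restrict
        ((ae_restrict_iff' measurableSet_Ioi).mpr (Eventually.of_forall fun y hy => ?_))
      have hxy : x - y < 0 := by simp only [mem_Ioi] at hy; linarith
      have he : Real.exp (m * (x - y)) ≤ 1 := Real.exp_le_one_iff.mpr (by nlinarith)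
      rw [Real.norm_eq_abs, abs_of_nonneg (mul_nonneg (mul_nonneg (hw_nonneg _)
        (Real.exp_pos _).le) (hu_pos x).le)]
      nlinarith [mul_le_mul_of_nonneg_left he
        (mul_nonneg (hw_nonneg (x - y)) (hu_pos x).le)]
    have hmono : ∫ y in Ioi x, w (x - y) * Real.exp (m * (x - y)) * u x
        ≤ ∫ y in Ioi x, w (x - y) * u y := by
      refine setIntegral_mono_on hint1 (hwu_int x).integrableOn measurableSet_Ioi
        (fun y hy => ?_)
      have hy' : x < y := hy
      have h2 : |y - x| = y - x := abs_of_pos (sub_pos.mpr hy')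
      have hexp : Real.exp (m * (x - y)) = Real.exp (-(m * |y - x|)) := by
        rw [h2]; congr 1; ring
      calc w (x - y) * Real.exp (m * (x - y)) * u x
          = w (x - y) * (u x * Real.exp (-(m * |y - x|))) := by rw [hexp]; ring
        _ ≤ w (x - y) * u y := mul_le_mul_of_nonneg_left (hcmp x y) (hw_nonneg _)
    have hrest : ∫ y in Ioi x, w (x - y) * u y ≤ ∫ y, w (x - y) * u y :=
      setIntegral_le_integral (hwu_int x)
        (Eventually.of_forall fun y => mul_nonneg (hw_nonneg _) (hu_pos y).le)
    have hc : ∫ y in Ioi x, w (x - y) * Real.exp (m * (x - y)) * u x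
        = (∫ z in Iio (0 : ℝ), w z * Real.exp (m * z)) * u x := by
      rw [← hchg, ← integral_mul_const]
    linarith
  refine ⟨mul_pos (mul_pos hr₀ hq₀) hδ_pos, fun x => ⟨?_, ?_⟩⟩
  · -- lower bound
    have hIx_nonneg : 0 ≤ ∫ y, w (x - y) * q y * u y :=
      integral_nonneg fun y =>
        mul_nonneg (mul_nonneg (hw_nonneg _) (hq₀.le.trans (hq y))) (hu_pos y).le
    have step1 : q₀ * ∫ y, w (x - y) * u y ≤ ∫ y, w (x - y) * q y * u y := by
      rw [← integral_const_mul]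
      refine integral_mono ((hwu_int x).const_mul q₀) (hint_main x) (fun y => ?_)
      have h := mul_le_mul_of_nonneg_right (hq y)
        (mul_nonneg (hw_nonneg (x - y)) (hu_pos y).le)
      calc q₀ * (w (x - y) * u y) ≤ q y * (w (x - y) * u y) := h
        _ = w (x - y) * q y * u y := by ring
    calc (r₀ * q₀ * ∫ z in Iio (0 : ℝ), w z * Real.exp (m * z)) * u x
        = r₀ * (q₀ * ((∫ z in Iio (0 : ℝ), w z * Real.exp (m * z)) * u x)) := by ring
      _ ≤ r₀ * (q₀ * ∫ y, w (x - y) * u y) :=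
          mul_le_mul_of_nonneg_left
            (mul_le_mul_of_nonneg_left (hconv_low x) hq₀.le) hr₀.le
      _ ≤ r₀ * ∫ y, w (x - y) * q y * u y := mul_le_mul_of_nonneg_left step1 hr₀.le
      _ ≤ r x * ∫ y, w (x - y) * q y * u y := mul_le_mul_of_nonneg_right (hr x) hIx_nonneg
      _ = Pnl r q w u x := rfl
  · -- upper bound
    have heq := hu_eig x
    have h1 : f x * u x ≤ F * u x :=
      mul_le_mul_of_nonneg_right ((le_abs_self _).trans (hF x)) (hu_pos x).le
    have h2 : -(c * deriv u x) ≤ |c| * m * u x := by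
      calc -(c * deriv u x) ≤ |c * deriv u x| := neg_le_abs _
        _ = |c| * |deriv u x| := abs_mul c _
        _ ≤ |c| * (m * u x) := mul_le_mul_of_nonneg_left (hm x) (abs_nonneg c)
        _ = |c| * m * u x := by ring
    have h3 : -(d * deriv (deriv u) x) ≤ d * m₃ * u x := by
      calc -(d * deriv (deriv u) x) ≤ |d * deriv (deriv u) x| := neg_le_abs _
        _ = d * |deriv (deriv u) x| := by rw [abs_mul, abs_of_nonneg hd]
        _ ≤ d * (m₃ * u x) := mul_le_mul_of_nonneg_left (hm₃ x) hd
        _ = d * m₃ * u x := by ring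
    have hgoal : (F + |c| * m + d * m₃) * u x
        = F * u x + |c| * m * u x + d * m₃ * u x := by ring
    rw [hgoal]
    linarith
end

section
/- Let μ : ℝ → (0,∞) be measurable and locally integrable, and suppose there exist α, β, k, l > 0 such that μ(x+y) ≤ k e^{−αy} μ(x) and μ(−x−y) ≤ l e^{−βy} μ(−x) for all x ≥ 0, y ≥ 0. Then B₁ := sup_{r>0} ( ∫_r^∞ μ(x) dx ) ( ∫_0^r μ(x)⁻¹ dx ) ≤ k²/α² and B₂ := sup_{r>0} ( ∫_{−∞}^{−r} μ(x) dx ) ( ∫_{−r}^0 μ(x)⁻¹ dx ) ≤ l²/β². -/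
open MeasureTheory Filter Set

private lemma exp_Ioi_integral (α r : ℝ) (hα : 0 < α) :
    ∫ x in Ioi r, Real.exp (-(α * x)) = α⁻¹ * Real.exp (-(α * r)) := by
  have h := integral_comp_mul_left_Ioi (fun x => Real.exp (-x)) r hα
  simp only [smul_eq_mul] at h
  rw [show (fun x => Real.exp (-(α * x))) = fun x => Real.exp (-(α * x)) from rfl]
  calc ∫ x in Ioi r, Real.exp (-(α * x)) = α⁻¹ * ∫ x in Ioi (α * r), Real.exp (-x) := h
    _ = α⁻¹ * Real.exp (-(α * r)) := by rw [integral_exp_neg_Ioi]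

private lemma key_half (μ : ℝ → ℝ) (hμ_meas : Measurable μ) (hμ_pos : ∀ x, 0 < μ x)
    (α k : ℝ) (hα : 0 < α) (hk : 0 < k)
    (hdecay : ∀ x ≥ (0 : ℝ), ∀ y ≥ (0 : ℝ), μ (x + y) ≤ k * Real.exp (-α * y) * μ x)
    (r : ℝ) (hr : 0 < r) :
    (∫ x in Ioi r, μ x) * (∫ x in Ioc (0 : ℝ) r, (μ x)⁻¹) ≤ k ^ 2 / α ^ 2 := by
  have hμr := (hμ_pos r).ne'
  set C : ℝ := k * μ r * Real.exp (α * r) with hC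
  have hb1 : ∀ x ∈ Ioi r, μ x ≤ C * Real.exp (-(α * x)) := by
    intro x hx
    rw [mem_Ioi] at hx
    have h := hdecay r hr.le (x - r) (by linarith)
    rw [show r + (x - r) = x by ring] at h
    calc μ x ≤ k * Real.exp (-α * (x - r)) * μ r := h
      _ = C * Real.exp (-(α * x)) := by
          rw [hC, show -α * (x - r) = α * r + -(α * x) by ring, Real.exp_add]; ring
  have hgint : IntegrableOn (fun x => C * Real.exp (-(α * x))) (Ioi r) := by
    have h := (exp_neg_integrableOn_Ioi r hα).const_mul C
    simp only [neg_mul] at h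
    exact h
  have hμint : IntegrableOn μ (Ioi r) := by
    refine Integrable.mono' hgint hμ_meas.aestronglyMeasurable.restrict ?_
    filter_upwards [ae_restrict_mem measurableSet_Ioi] with x hx
    rw [Real.norm_eq_abs, abs_of_pos (hμ_pos x)]
    exact hb1 x hx
  have I1 : (∫ x in Ioi r, μ x) ≤ k * μ r / α := by
    have h := setIntegral_mono_on hμint hgint measurableSet_Ioi hb1
    rw [integral_const_mul, exp_Ioi_integral α r hα] at h
    have he : Real.exp (α * r) * Real.exp (-(α * r)) = 1 := by
      rw [← Real.exp_add]; simp
    calc (∫ x in Ioi r, μ x) ≤ C * (α⁻¹ * Real.exp (-(α * r))) := h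
      _ = (k * μ r * α⁻¹) * (Real.exp (α * r) * Real.exp (-(α * r))) := by rw [hC]; ring
      _ = k * μ r / α := by rw [he, mul_one, div_eq_mul_inv]
  have hb2 : ∀ x ∈ Ioc (0 : ℝ) r, (μ x)⁻¹ ≤ (k / μ r) * Real.exp (-(α * (r - x))) := by
    intro x hx
    obtain ⟨hx0, hxr⟩ := hx
    have h := hdecay x hx0.le (r - x) (by linarith)
    rw [show x + (r - x) = r by ring] at h
    set c : ℝ := k * Real.exp (-α * (r - x)) with hc
    have hcpos : 0 < c := by positivity
    have h1 : μ r / c ≤ μ x := (div_le_iff₀ hcpos).2 (h.trans_eq (mul_comm _ _))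
    have h2 := inv_anti₀ (div_pos (hμ_pos r) hcpos) h1
    rw [inv_div] at h2
    calc (μ x)⁻¹ ≤ c / μ r := h2
      _ = (k / μ r) * Real.exp (-(α * (r - x))) := by rw [hc, neg_mul]; ring
  have hg2cont : Continuous (fun x : ℝ => (k / μ r) * Real.exp (-(α * (r - x)))) := by
    continuity
  have hg2int : IntegrableOn (fun x => (k / μ r) * Real.exp (-(α * (r - x)))) (Ioc (0 : ℝ) r) :=
    hg2cont.integrableOn_Ioc
  have hinvint : IntegrableOn (fun x => (μ x)⁻¹) (Ioc (0 : ℝ) r) := by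
    refine Integrable.mono' (g := fun _ => k / μ r) ?_
      hμ_meas.inv.aestronglyMeasurable.restrict ?_
    · exact integrableOn_const measure_Ioc_lt_top.ne
    · filter_upwards [ae_restrict_mem measurableSet_Ioc] with x hx
      rw [Real.norm_eq_abs, abs_of_pos (inv_pos.2 (hμ_pos x))]
      refine (hb2 x hx).trans ?_
      have hle : Real.exp (-(α * (r - x))) ≤ 1 := by
        rw [Real.exp_le_one_iff]
        nlinarith [hx.2, hx.1]
      have : 0 ≤ k / μ r := div_nonneg hk.le (hμ_pos r).le
      nlinarith
  have hexp2 : (∫ x in Ioc (0 : ℝ) r, Real.exp (-(α * (r - x)))) ≤ 1 / α := by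
    rw [← intervalIntegral.integral_of_le hr.le]
    have h1 : (∫ x in (0 : ℝ)..r, Real.exp (-(α * (r - x))))
        = ∫ x in (0 : ℝ)..r, Real.exp (-(α * x)) := by
      have h := intervalIntegral.integral_comp_sub_left (a := (0:ℝ)) (b := r)
        (fun t => Real.exp (-(α * t))) r
      simpa using h
    have h2 : (∫ x in (0 : ℝ)..r, Real.exp (-(α * x))) = (1 - Real.exp (-(α * r))) / α := by
      have h := intervalIntegral.integral_comp_mul_left (a := (0:ℝ)) (b := r)
        (fun t => Real.exp t) (c := -α) (neg_ne_zero.2 hα.ne')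
      rw [show (fun x => Real.exp (-(α * x))) = fun x => Real.exp (-α * x) from by
        funext x; rw [neg_mul]]
      simp only [smul_eq_mul, mul_zero] at h
      rw [h, integral_exp]
      rw [Real.exp_zero, neg_mul]
      field_simp
      ring
    rw [h1, h2]
    have he := Real.exp_pos (-(α * r))
    rw [div_le_div_iff₀ hα hα]
    nlinarith
  have I2 : (∫ x in Ioc (0 : ℝ) r, (μ x)⁻¹) ≤ (k / μ r) * (1 / α) := by
    have h := setIntegral_mono_on hinvint hg2int measurableSet_Ioc hb2
    rw [integral_const_mul] at h
    exact h.trans (mul_le_mul_of_nonneg_left hexp2 (div_nonneg hk.le (hμ_pos r).le))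
  have hI2nonneg : 0 ≤ ∫ x in Ioc (0 : ℝ) r, (μ x)⁻¹ :=
    setIntegral_nonneg measurableSet_Ioc fun x _ => (inv_pos.2 (hμ_pos x)).le
  calc (∫ x in Ioi r, μ x) * (∫ x in Ioc (0 : ℝ) r, (μ x)⁻¹)
      ≤ (k * μ r / α) * ((k / μ r) * (1 / α)) := mul_le_mul I1 I2 hI2nonneg (by
        have := (hμ_pos r).le
        positivity)
    _ = k ^ 2 / α ^ 2 := by field_simp

/-- Step (II) of the proof of Theorem 3.4: exponential decay of the weight `μ` implies that
the Muckenhoupt constants are bounded, `B₁ ≤ k²/α²` and `B₂ ≤ l²/β²`. -/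
theorem stmt_7
    (μ : ℝ → ℝ) (hμ_meas : Measurable μ) (hμ_pos : ∀ x, 0 < μ x)
    (hμ_loc : LocallyIntegrable μ volume)
    (α β k l : ℝ) (hα : 0 < α) (hβ : 0 < β) (hk : 0 < k) (hl : 0 < l)
    (hdecay1 : ∀ x ≥ (0 : ℝ), ∀ y ≥ (0 : ℝ), μ (x + y) ≤ k * Real.exp (-α * y) * μ x)
    (hdecay2 : ∀ x ≥ (0 : ℝ), ∀ y ≥ (0 : ℝ), μ (-x - y) ≤ l * Real.exp (-β * y) * μ (-x)) :
    (∀ r > (0 : ℝ),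
      (∫ x in Ioi r, μ x) * (∫ x in Ioc (0 : ℝ) r, (μ x)⁻¹) ≤ k ^ 2 / α ^ 2) ∧
    (∀ r > (0 : ℝ),
      (∫ x in Iio (-r), μ x) * (∫ x in Ico (-r) (0 : ℝ), (μ x)⁻¹) ≤ l ^ 2 / β ^ 2) := by
  refine ⟨fun r hr => key_half μ hμ_meas hμ_pos α k hα hk hdecay1 r hr, fun r hr => ?_⟩
  have hν_meas : Measurable (fun x : ℝ => μ (-x)) := hμ_meas.comp measurable_neg
  have hν_pos : ∀ x : ℝ, 0 < μ (-x) := fun x => hμ_pos _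
  have hν_decay : ∀ x ≥ (0 : ℝ), ∀ y ≥ (0 : ℝ),
      μ (-(x + y)) ≤ l * Real.exp (-β * y) * μ (-x) := by
    intro x hx y hy
    have h := hdecay2 x hx y hy
    rwa [show -x - y = -(x + y) by ring] at h
  have h1 : (∫ x in Iio (-r), μ x) = ∫ x in Ioi r, μ (-x) := by
    rw [show (∫ x in Ioi r, μ (-x)) = ∫ x in Iic (-r), μ x from integral_comp_neg_Ioi r μ,
      integral_Iic_eq_integral_Iio]
  have h2 : (∫ x in Ico (-r) (0 : ℝ), (μ x)⁻¹) = ∫ x in Ioc (0 : ℝ) r, (μ (-x))⁻¹ := by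
    have e1 : (∫ x in Ico (-r) (0 : ℝ), (μ x)⁻¹) = ∫ x in Ioc (-r) (0 : ℝ), (μ x)⁻¹ := by
      rw [integral_Ico_eq_integral_Ioo, integral_Ioc_eq_integral_Ioo]
    have e2 := intervalIntegral.integral_comp_neg (a := (0 : ℝ)) (b := r)
      (fun x => (μ x)⁻¹)
    rw [e1, ← intervalIntegral.integral_of_le (neg_nonpos.2 hr.le),
      ← intervalIntegral.integral_of_le hr.le, e2, neg_zero]
  rw [h1, h2]
  have h := key_half (fun x => μ (-x)) hν_meas hν_pos β l hβ hl
    (fun x hx y hy => hν_decay x hx y hy) r hr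
  simpa using h
end

section
/- Let F : ℝ → ℝ be C¹ with F′ ≥ 0, let w be a probability density with |w_x| ≤ M w almost everywhere, and let û : ℝ → ℝ be C² and strictly increasing with û′ > 0, satisfying |û″(x)| ≤ M û′(x) for all x, and let |c| M < 1. Set û⁰′ := û′ − c û″ (the derivative of û⁰ = û − cû′ = w∗F(û)). Assume 0 < ∫ û⁰′(x) û′(x) F′(û(x)) dx < ∞. Then ∫ û″(x)² F′(û(x)) dx ≤ ( M² / (1 − |c| M) ) ∫ û⁰′(x) û′(x) F′(û(x)) dx. -/
open MeasureTheory Filter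

/-- The estimate `‖û_xx‖²_𝔪 / Z⁰ ≤ M²/(1−|c|M)` in the neural field example:
with `𝔪 = F′(û)` and `û⁰′ = û′ − cû″`,
`∫ û″² F′(û) dx ≤ (M²/(1−|c|M)) ∫ û⁰′ û′ F′(û) dx`. -/
theorem stmt_10
    (F : ℝ → ℝ) (hF : ContDiff ℝ 1 F) (hF' : ∀ x, 0 ≤ deriv F x)
    (M c : ℝ) (hcM : |c| * M < 1)
    (w : ℝ → ℝ) (hw_meas : Measurable w) (hw_nonneg : ∀ x, 0 ≤ w x)
    (hw_int : Integrable w) (hw_prob : (∫ x, w x) = 1)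
    (w' : ℝ → ℝ) (hw_diff : ∀ᵐ x ∂(volume : Measure ℝ), HasDerivAt w (w' x) x)
    (hw_bdd : ∀ᵐ x ∂(volume : Measure ℝ), |w' x| ≤ M * w x)
    (u : ℝ → ℝ) (hu : ContDiff ℝ 2 u) (hu_mono : StrictMono u)
    (hu' : ∀ x, 0 < deriv u x)
    (hbend : ∀ x, |deriv (deriv u) x| ≤ M * deriv u x)
    (hint : Integrable
      (fun x => (deriv u x - c * deriv (deriv u) x) * deriv u x * deriv F (u x)))
    (hpos : 0 < ∫ x, (deriv u x - c * deriv (deriv u) x) * deriv u x * deriv F (u x)) :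
    (∫ x, (deriv (deriv u) x) ^ 2 * deriv F (u x)) ≤
      M ^ 2 / (1 - |c| * M) *
        ∫ x, (deriv u x - c * deriv (deriv u) x) * deriv u x * deriv F (u x) := by
  have hM : 0 ≤ M := by
    have h0 := hbend 0
    nlinarith [abs_nonneg (deriv (deriv u) 0), hu' 0]
  have hden : 0 < 1 - |c| * M := by linarith
  set k : ℝ := M ^ 2 / (1 - |c| * M) with hk
  have hk0 : 0 ≤ k := div_nonneg (by positivity) hden.le
  -- pointwise estimate
  have hpt : ∀ x, (deriv (deriv u) x) ^ 2 * deriv F (u x) ≤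
      k * ((deriv u x - c * deriv (deriv u) x) * deriv u x * deriv F (u x)) := by
    intro x
    set a := deriv u x with ha
    set b := deriv (deriv u) x with hb
    have ha0 : 0 < a := hu' x
    have hba : |b| ≤ M * a := hbend x
    have hm : 0 ≤ deriv F (u x) := hF' (u x)
    have hb2 : b ^ 2 ≤ M ^ 2 * a ^ 2 := by
      nlinarith [abs_nonneg b, sq_abs b]
    have hlow : (1 - |c| * M) * a ≤ a - c * b := by
      have : c * b ≤ |c| * |b| := by
        calc c * b ≤ |c * b| := le_abs_self _
        _ = |c| * |b| := abs_mul c b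
      nlinarith [abs_nonneg c]
    have hlow2 : (1 - |c| * M) * a ^ 2 ≤ (a - c * b) * a := by nlinarith
    have key : b ^ 2 ≤ k * ((a - c * b) * a) := by
      rw [hk, div_mul_eq_mul_div, le_div_iff₀ hden]
      nlinarith
    nlinarith
  -- integrability and measurability
  have hcont : Continuous fun x => (deriv (deriv u) x) ^ 2 * deriv F (u x) := by
    have h1 : ContDiff ℝ 1 (deriv u) := by
      have := (contDiff_succ_iff_deriv (n := 1)).mp (by exact_mod_cast hu)
      exact this.2.2
    have h2 : Continuous (deriv (deriv u)) := h1.continuous_deriv le_rfl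
    have h3 : Continuous (deriv F) := hF.continuous_deriv le_rfl
    exact ((h2.pow 2).mul (h3.comp hu.continuous))
  have hnn : ∀ x, 0 ≤ (deriv (deriv u) x) ^ 2 * deriv F (u x) := fun x =>
    mul_nonneg (sq_nonneg _) (hF' (u x))
  have hgint : Integrable (fun x =>
      k * ((deriv u x - c * deriv (deriv u) x) * deriv u x * deriv F (u x))) :=
    hint.const_mul k
  have hLint : Integrable (fun x => (deriv (deriv u) x) ^ 2 * deriv F (u x)) := by
    refine hgint.mono' hcont.aestronglyMeasurable ?_
    filter_upwards with x
    rw [Real.norm_eq_abs, abs_of_nonneg (hnn x)]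
    exact hpt x
  calc (∫ x, (deriv (deriv u) x) ^ 2 * deriv F (u x))
      ≤ ∫ x, k * ((deriv u x - c * deriv (deriv u) x) * deriv u x * deriv F (u x)) :=
        integral_mono hLint hgint hpt
    _ = k * ∫ x, (deriv u x - c * deriv (deriv u) x) * deriv u x * deriv F (u x) :=
        integral_const_mul k _
end

section
/- In the neural field traveling wave setting with c > 0, assume F is C² and convex–concave (there exists z such that F″(x) ≥ 0 for x ≤ z and F″(x) ≤ 0 for x ≥ z) and that the Ermentrout–McLeod formula holds: c = ( ∫_{a₁}^{a₂} (t − F(t)) dt ) / ( ∫ û′(x)² F′(û(x)) dx ). Then c ≤ (σ/4) · ( ∫_{a₁}^{a₂} (t − F(t)) dt ) / ( ∫_a^{a₂} (F(t) − t) dt ). -/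
open MeasureTheory Filter Set

set_option maxHeartbeats 1000000

theorem deriv_nonneg_of_mono' {f : ℝ → ℝ} {x : ℝ} (hf : Monotone f)
    (hd : DifferentiableAt ℝ f x) : 0 ≤ deriv f x := by
  have h := hd.hasDerivAt
  rw [hasDerivAt_iff_tendsto_slope] at h
  refine ge_of_tendsto h ?_
  filter_upwards [self_mem_nhdsWithin] with y hy
  rw [slope_def_field]
  rcases lt_or_gt_of_ne (Ne.symm hy) with h1 | h1
  · exact div_nonneg (sub_nonneg.2 (hf h1.le)) (sub_nonneg.2 h1.le)
  · exact div_nonneg_of_nonpos (sub_nonpos.2 (hf h1.le)) (sub_nonpos.2 h1.le)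

/-- Upper bound on the wave speed (Proposition 4.2, upper bound): in the neural field
traveling wave setting with two-sided exponential kernel and convex–concave gain `F`,
the Ermentrout–McLeod formula yields
`c ≤ (σ/4) (∫_{a₁}^{a₂} (t−F(t)) dt) / (∫_a^{a₂} (F(t)−t) dt)`. -/
theorem stmt_11
    (σ c : ℝ) (hσ : 0 < σ) (hc : 0 < c)
    (a₁ a a₂ : ℝ) (ha₁ : a₁ < a) (ha₂ : a < a₂)
    (F : ℝ → ℝ) (hF : ContDiff ℝ 2 F) (hF_mono : Monotone F)
    (hfix₁ : F a₁ = a₁) (hfix : F a = a) (hfix₂ : F a₂ = a₂)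
    (hbelow : ∀ t ∈ Ioo a₁ a, F t < t) (habove : ∀ t ∈ Ioo a a₂, t < F t)
    (hcc : ∃ z : ℝ, (∀ x ≤ z, 0 ≤ deriv (deriv F) x) ∧ (∀ x, z ≤ x → deriv (deriv F) x ≤ 0))
    (u : ℝ → ℝ) (hu : ContDiff ℝ 2 u) (hu_mono : StrictMono u)
    (hlim₁ : Tendsto u atBot (nhds a₁)) (hlim₂ : Tendsto u atTop (nhds a₂))
    (hlim₃ : Tendsto (deriv u) atBot (nhds 0)) (hlim₄ : Tendsto (deriv u) atTop (nhds 0))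
    (hprofile : ∀ x, -c * deriv u x =
      -u x + ∫ y, 1 / (2 * σ) * Real.exp (-|x - y| / σ) * F (u y))
    (hprofile2 : ∀ x, σ ^ 2 * deriv (deriv u) x =
      u x - ∫ s in Ioi (0 : ℝ), Real.exp (-s) * F (u (x + c * s)))
    (hint : Integrable (fun x => (deriv u x) ^ 2 * deriv F (u x)))
    (hpos : 0 < ∫ x, (deriv u x) ^ 2 * deriv F (u x))
    (hEM : c = (∫ t in a₁..a₂, (t - F t)) / ∫ x, (deriv u x) ^ 2 * deriv F (u x)) :
    c ≤ σ / 4 * ((∫ t in a₁..a₂, (t - F t)) / ∫ t in a..a₂, (F t - t)) := by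
  -- Notation
  set D := ∫ x, (deriv u x) ^ 2 * deriv F (u x) with hD_def
  set N := ∫ t in a₁..a₂, (t - F t) with hN_def
  set M := ∫ t in a..a₂, (F t - t) with hM_def
  -- Regularity facts
  have hFc : Continuous F := hF.continuous
  have hF1 : Differentiable ℝ F := hF.differentiable two_ne_zero
  have hF'c : Continuous (deriv F) := hF.continuous_deriv one_le_two
  have huc : Continuous u := hu.continuous
  have hu1 : Differentiable ℝ u := hu.differentiable two_ne_zero
  have hud1 : ContDiff ℝ 1 (deriv u) :=
    ((contDiff_succ_iff_deriv (n := 1)).mp (by exact_mod_cast hu)).2.2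
  have hu'c : Continuous (deriv u) := hud1.continuous
  have hu'd : Differentiable ℝ (deriv u) := hud1.differentiable one_ne_zero
  have hu''c : Continuous (deriv (deriv u)) := hud1.continuous_deriv le_rfl
  -- sign facts
  have hu'0 : ∀ x, 0 ≤ deriv u x := fun x =>
    deriv_nonneg_of_mono' hu_mono.monotone (hu1 x)
  have hF'0 : ∀ t, 0 ≤ deriv F t := fun t => deriv_nonneg_of_mono' hF_mono (hF1 t)
  have hule : ∀ x, u x ≤ a₂ := hu_mono.monotone.ge_of_tendsto hlim₂
  have huge : ∀ x, a₁ ≤ u x := hu_mono.monotone.le_of_tendsto hlim₁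
  have hult : ∀ x, u x < a₂ := fun x => lt_of_lt_of_le (hu_mono (lt_add_one x)) (hule _)
  have hugt : ∀ x, a₁ < u x := fun x => lt_of_le_of_lt (huge (x - 1)) (hu_mono (by linarith))
  have hFle : ∀ t, a₁ ≤ t → t ≤ a → F t ≤ t := by
    intro t h1 h2
    rcases eq_or_lt_of_le h1 with rfl | h1
    · exact le_of_eq hfix₁
    rcases eq_or_lt_of_le h2 with rfl | h2
    · exact le_of_eq hfix
    exact (hbelow t ⟨h1, h2⟩).le
  have hFge : ∀ t, a ≤ t → t ≤ a₂ → t ≤ F t := by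
    intro t h1 h2
    rcases eq_or_lt_of_le h1 with rfl | h1
    · exact le_of_eq hfix.symm
    rcases eq_or_lt_of_le h2 with rfl | h2
    · exact le_of_eq hfix₂.symm
    exact (habove t ⟨h1, h2⟩).le
  -- positivity of M and N
  have hMpos : 0 < M := by
    rw [hM_def]
    refine intervalIntegral.intervalIntegral_pos_of_pos_on
      ((hFc.sub continuous_id).intervalIntegrable _ _) (fun t ht => ?_) ha₂
    exact sub_pos.2 (habove t ht)
  have hcD : c * D = N := by
    rw [hEM, div_mul_cancel₀]
    exact ne_of_gt hpos
  have hNpos : 0 < N := hcD ▸ mul_pos hc hpos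
  -- The key differential inequality : σ² u'' ≤ u - F(u)
  have hineq : ∀ x, σ ^ 2 * deriv (deriv u) x ≤ u x - F (u x) := by
    intro x
    rw [hprofile2 x]
    have hexp : IntegrableOn (fun s => Real.exp (-s)) (Ioi (0:ℝ)) := by
      simpa using exp_neg_integrableOn_Ioi 0 one_pos
    obtain ⟨C, hC⟩ := isCompact_Icc.exists_bound_of_continuousOn
      (s := Icc a₁ a₂) hFc.continuousOn
    have hcont : Continuous (fun s => Real.exp (-s) * F (u (x + c * s))) := by
      exact (Real.continuous_exp.comp continuous_neg).mul
        (hFc.comp (huc.comp (continuous_const.add (continuous_const.mul continuous_id))))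
    have hϕi : IntegrableOn (fun s => Real.exp (-s) * F (u (x + c * s))) (Ioi (0:ℝ)) := by
      refine Integrable.mono (hexp.const_mul C) hcont.aestronglyMeasurable.restrict
        (ae_of_all _ fun s => ?_)
      have h1 : |F (u (x + c * s))| ≤ C := by
        have := hC (u (x + c * s)) ⟨huge _, hule _⟩
        simpa [Real.norm_eq_abs] using this
      have h2 : (0:ℝ) < Real.exp (-s) := Real.exp_pos _
      rw [Real.norm_eq_abs, Real.norm_eq_abs, abs_mul, abs_of_pos h2, abs_mul,
        abs_of_pos h2, mul_comm |C| _]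
      exact mul_le_mul_of_nonneg_left (h1.trans (le_abs_self C)) h2.le
    have hcomp : ∫ s in Ioi (0:ℝ), Real.exp (-s) * F (u x) ≤
        ∫ s in Ioi (0:ℝ), Real.exp (-s) * F (u (x + c * s)) := by
      refine setIntegral_mono_on (hexp.mul_const _) hϕi measurableSet_Ioi fun s hs => ?_
      have : u x ≤ u (x + c * s) := hu_mono.monotone (by nlinarith [mem_Ioi.mp hs])
      exact mul_le_mul_of_nonneg_left (hF_mono this) (Real.exp_pos _).le
    have heval : ∫ s in Ioi (0:ℝ), Real.exp (-s) * F (u x) = F (u x) := by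
      rw [integral_mul_const, integral_exp_neg_Ioi_zero, one_mul]
    linarith [hcomp, heval.symm.le]
  -- Φ and G
  set Φ : ℝ → ℝ := fun t => ∫ s in a₁..t, (s - F s) with hΦ_def
  have hΦint : ∀ p q : ℝ, IntervalIntegrable (fun s => s - F s) volume p q :=
    fun p q => (continuous_id.sub hFc).intervalIntegrable _ _
  have hΦd : ∀ t, HasDerivAt Φ (t - F t) t := by
    intro t
    exact intervalIntegral.integral_hasDerivAt_right (hΦint a₁ t)
      ((continuous_id.sub hFc).stronglyMeasurableAtFilter _ _)
      (continuous_id.sub hFc).continuousAt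
  have hΦc : Continuous Φ := by
    have : Differentiable ℝ Φ := fun t => (hΦd t).differentiableAt
    exact this.continuous
  have hΦa₂ : Φ a₂ = N := rfl
  have hΦadd : ∀ p q : ℝ, Φ q - Φ p = ∫ s in p..q, (s - F s) := by
    intro p q
    have := intervalIntegral.integral_add_adjacent_intervals (hΦint a₁ p) (hΦint p q)
    rw [hΦ_def]
    dsimp only
    linarith [this]
  set G : ℝ → ℝ := fun t => Φ t - N with hG_def
  have hGc : Continuous G := hΦc.sub continuous_const
  have hGd : ∀ t, HasDerivAt G (t - F t) t := fun t => (hΦd t).sub_const N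
  have hGint : ∀ t, G t = ∫ s in t..a₂, (F s - s) := by
    intro t
    have h1 : Φ a₂ - Φ t = ∫ s in t..a₂, (s - F s) := hΦadd t a₂
    have h2 : ∫ s in t..a₂, (F s - s) = -∫ s in t..a₂, (s - F s) := by
      rw [← intervalIntegral.integral_neg]
      congr 1; ext s; ring
    rw [hG_def]; dsimp only; rw [h2, ← h1, hΦa₂]; ring
  have hGa : G a = M := by
    rw [hGint a, hM_def]
  have hGa₁ : G a₁ = -N := by
    show Φ a₁ - N = -N
    show (∫ s in a₁..a₁, (s - F s)) - N = -N
    rw [intervalIntegral.integral_same]; ring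
  have hGa₂ : G a₂ = 0 := by
    show Φ a₂ - N = 0
    rw [hΦa₂]; ring
  -- The energy estimate : 2 G(u x) ≤ σ² (u' x)²
  have key : ∀ x, 2 * G (u x) ≤ σ ^ 2 * (deriv u x) ^ 2 := by
    set W : ℝ → ℝ := fun x => σ ^ 2 * (deriv u x) ^ 2 / 2 - Φ (u x) with hW_def
    have hWd : ∀ x, HasDerivAt W
        (deriv u x * (σ ^ 2 * deriv (deriv u) x - (u x - F (u x)))) x := by
      intro x
      have h1 : HasDerivAt (fun y => σ ^ 2 * (deriv u y) ^ 2 / 2)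
          (σ ^ 2 * (2 * deriv u x ^ 1 * deriv (deriv u) x) / 2) x :=
        (((hu'd x).hasDerivAt.pow 2).const_mul (σ ^ 2)).div_const 2
      have h2 : HasDerivAt (fun y => Φ (u y)) ((u x - F (u x)) * deriv u x) x :=
        (hΦd (u x)).comp x (hu1 x).hasDerivAt
      have := h1.sub h2
      exact this.congr_deriv (by ring)
    have hWanti : Antitone W := by
      refine antitone_of_deriv_nonpos (fun x => (hWd x).differentiableAt) fun x => ?_
      rw [(hWd x).deriv]
      exact mul_nonpos_of_nonneg_of_nonpos (hu'0 x) (by linarith [hineq x])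
    have hWlim : Tendsto W atTop (nhds (-N)) := by
      have h1 : Tendsto (fun x => σ ^ 2 * (deriv u x) ^ 2 / 2) atTop (nhds 0) := by
        have : Continuous (fun z : ℝ => σ ^ 2 * z ^ 2 / 2) :=
          (continuous_const.mul (continuous_pow 2)).div_const 2
        have := (this.tendsto 0).comp hlim₄
        simpa [Function.comp_def] using this
      have h2 : Tendsto (fun x => Φ (u x)) atTop (nhds N) := by
        have := (hΦc.tendsto a₂).comp hlim₂
        rwa [hΦa₂] at this
      have := h1.sub h2
      simpa using this
    intro x
    have := hWanti.le_of_tendsto hWlim x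
    have hWx : -N ≤ σ ^ 2 * (deriv u x) ^ 2 / 2 - Φ (u x) := this
    have : G (u x) = Φ (u x) - N := rfl
    linarith
  -- t* construction
  have hSne : ∃ t ∈ Icc a₁ a, G t = 0 := by
    have h0 : (0:ℝ) ∈ Icc (G a₁) (G a) := by
      rw [hGa₁, hGa]; exact ⟨by linarith, hMpos.le⟩
    obtain ⟨t, ht, hGt⟩ := intermediate_value_Icc ha₁.le hGc.continuousOn h0
    exact ⟨t, ht, hGt⟩
  set S : Set ℝ := {t | t ∈ Icc a₁ a ∧ G t = 0} with hS_def
  have hS_ne : S.Nonempty := by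
    obtain ⟨t, ht, hGt⟩ := hSne; exact ⟨t, ht, hGt⟩
  have hS_closed : IsClosed S := by
    have : S = Icc a₁ a ∩ G ⁻¹' {0} := by
      ext t; simp [hS_def, Set.mem_inter_iff]
    rw [this]
    exact isClosed_Icc.inter (isClosed_singleton.preimage hGc)
  have hS_cpt : IsCompact S := isCompact_Icc.of_isClosed_subset hS_closed fun t ht => ht.1
  set ts := sSup S with hts_def
  have hts_mem : ts ∈ S := hS_cpt.sSup_mem hS_ne
  have hts_Icc : ts ∈ Icc a₁ a := hts_mem.1
  have hGts : G ts = 0 := hts_mem.2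
  have hts_lt_a : ts < a := by
    rcases eq_or_lt_of_le hts_Icc.2 with h | h
    · exfalso; rw [h, hGa] at hGts; linarith
    · exact h
  have hts_gt : a₁ < ts := by
    rcases eq_or_lt_of_le hts_Icc.1 with h | h
    · exfalso; rw [← h, hGa₁] at hGts; linarith
    · exact h
  have hGpos : ∀ t, ts < t → t < a₂ → 0 < G t := by
    intro t h1 h2
    rcases le_or_gt t a with hta | hta
    · by_contra hle
      push_neg at hle
      rcases eq_or_lt_of_le hle with hGt | hGt
      · have : t ∈ S := ⟨⟨hts_gt.le.trans h1.le, hta⟩, hGt⟩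
        exact absurd (le_csSup hS_cpt.bddAbove this) (not_le.2 h1)
      · have h0 : (0:ℝ) ∈ Icc (G t) (G a) := by rw [hGa]; exact ⟨hGt.le, hMpos.le⟩
        obtain ⟨s, hs, hGs⟩ := intermediate_value_Icc hta hGc.continuousOn h0
        have : s ∈ S := ⟨⟨hts_gt.le.trans (h1.le.trans hs.1), hs.2⟩, hGs⟩
        have := le_csSup hS_cpt.bddAbove this
        linarith [hs.1]
    · rw [hGint t]
      refine intervalIntegral.intervalIntegral_pos_of_pos_on
        ((hFc.sub continuous_id).intervalIntegrable _ _) (fun s hs => ?_) h2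
      exact sub_pos.2 (habove s ⟨hta.trans hs.1, hs.2⟩)
  -- find x₀ with u x₀ = ts
  have hx₀ : ∃ x₀, u x₀ = ts := by
    obtain ⟨x₁, hx₁⟩ := (hlim₁.eventually_lt_const hts_gt).exists
    obtain ⟨x₂, hx₂⟩ := (hlim₂.eventually_const_lt (hts_lt_a.trans ha₂)).exists
    have hx12 : x₁ ≤ x₂ := by
      by_contra hgt
      push_neg at hgt
      exact absurd (hu_mono hgt) (by linarith)
    have hmem : ts ∈ Icc (u x₁) (u x₂) := ⟨hx₁.le, hx₂.le⟩
    obtain ⟨x₀, _, hx₀⟩ := intermediate_value_Icc hx12 huc.continuousOn hmem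
    exact ⟨x₀, hx₀⟩
  obtain ⟨x₀, hx₀⟩ := hx₀
  -- the absolute-value antiderivative A
  have hAbs_cont : Continuous (fun s : ℝ => |F s - s|) := (hFc.sub continuous_id).abs
  set A : ℝ → ℝ := fun t => ∫ s in ts..t, |F s - s| with hA_def
  have hAint : ∀ p q : ℝ, IntervalIntegrable (fun s => |F s - s|) volume p q :=
    fun p q => hAbs_cont.intervalIntegrable _ _
  have hAd : ∀ t, HasDerivAt A (|F t - t|) t := fun t =>
    intervalIntegral.integral_hasDerivAt_right (hAint ts t)
      (hAbs_cont.stronglyMeasurableAtFilter _ _) hAbs_cont.continuousAt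
  have hAc : Continuous A :=
    (Differentiable.continuous fun t => (hAd t).differentiableAt)
  have hΦts : Φ ts = N := by
    have : G ts = Φ ts - N := rfl
    linarith [hGts, this.symm.le, this.le]
  have hAts : A ts = 0 := intervalIntegral.integral_same
  have hAa₂ : A a₂ = 2 * M := by
    have hsplit : (∫ s in ts..a, |F s - s|) + ∫ s in a..a₂, |F s - s| = A a₂ :=
      intervalIntegral.integral_add_adjacent_intervals (hAint ts a) (hAint a a₂)
    have h1 : ∫ s in ts..a, |F s - s| = ∫ s in ts..a, (s - F s) := by
      refine intervalIntegral.integral_congr fun s hs => ?_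
      rw [uIcc_of_le hts_lt_a.le] at hs
      have := hFle s (hts_gt.le.trans hs.1) hs.2
      rw [abs_of_nonpos (by linarith)]; ring
    have h2 : ∫ s in a..a₂, |F s - s| = M := by
      rw [hM_def]
      refine intervalIntegral.integral_congr fun s hs => ?_
      rw [uIcc_of_le ha₂.le] at hs
      exact abs_of_nonneg (sub_nonneg.2 (hFge s hs.1 hs.2))
    have h3 : ∫ s in ts..a, (s - F s) = Φ a - Φ ts := (hΦadd ts a).symm
    have h4 : G a = Φ a - N := rfl
    rw [← hsplit, h1, h2, h3, hΦts]
    rw [hGa] at h4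
    linarith
  -- the comparison function E and the monotone functional Z
  set E : ℝ → ℝ := fun x => Real.sqrt (2 * G (u x)) * (F (u x) - u x) + 2 * A (u x)
    with hE_def
  have hEc : Continuous E :=
    ((Real.continuous_sqrt.comp (continuous_const.mul (hGc.comp huc))).mul
      ((hFc.comp huc).sub huc)).add (continuous_const.mul (hAc.comp huc))
  have hEx₀ : E x₀ = 0 := by
    show Real.sqrt (2 * G (u x₀)) * (F (u x₀) - u x₀) + 2 * A (u x₀) = 0
    rw [hx₀, hGts, hAts]
    simp
  set g : ℝ → ℝ := fun x => σ * ((deriv u x) ^ 2 * deriv F (u x)) with hg_def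
  have hgc : Continuous g :=
    continuous_const.mul ((hu'c.pow 2).mul (hF'c.comp huc))
  have hg0 : ∀ x, 0 ≤ g x := fun x =>
    mul_nonneg hσ.le (mul_nonneg (sq_nonneg _) (hF'0 _))
  have hId : ∀ R, HasDerivAt (fun r => ∫ x in x₀..r, g x) (g R) R := fun R =>
    intervalIntegral.integral_hasDerivAt_right (hgc.intervalIntegrable _ _)
      (hgc.stronglyMeasurableAtFilter _ _) hgc.continuousAt
  set Z : ℝ → ℝ := fun R => (∫ x in x₀..R, g x) - E R with hZ_def
  have hZc : Continuous Z :=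
    (Differentiable.continuous fun R => (hId R).differentiableAt).sub hEc
  -- derivative of E above x₀
  have hEd : ∀ x, x₀ < x → HasDerivAt E
      ((1 / (2 * Real.sqrt (2 * G (u x))) * (2 * ((u x - F (u x)) * deriv u x)))
          * (F (u x) - u x)
        + Real.sqrt (2 * G (u x)) * (deriv F (u x) * deriv u x - deriv u x)
        + 2 * (|F (u x) - u x| * deriv u x)) x := by
    intro x hx
    have hGxpos : 0 < G (u x) := hGpos _ (hx₀ ▸ hu_mono hx) (hult x)
    have s1 : HasDerivAt (fun y => 2 * G (u y)) (2 * ((u x - F (u x)) * deriv u x)) x :=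
      ((hGd (u x)).comp x (hu1 x).hasDerivAt).const_mul 2
    have s2 : HasDerivAt (fun y => Real.sqrt (2 * G (u y)))
        (1 / (2 * Real.sqrt (2 * G (u x))) * (2 * ((u x - F (u x)) * deriv u x))) x :=
      (Real.hasDerivAt_sqrt (by positivity)).comp x s1
    have s3 : HasDerivAt (fun y => F (u y) - u y)
        (deriv F (u x) * deriv u x - deriv u x) x :=
      ((hF1 (u x)).hasDerivAt.comp x (hu1 x).hasDerivAt).sub (hu1 x).hasDerivAt
    have s4 : HasDerivAt (fun y => A (u y)) (|F (u x) - u x| * deriv u x) x :=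
      (hAd (u x)).comp x (hu1 x).hasDerivAt
    exact (s2.mul s3).add (s4.const_mul 2)
  -- Z is monotone on [x₀, ∞)
  have hZmono : MonotoneOn Z (Ici x₀) := by
    refine monotoneOn_of_deriv_nonneg (convex_Ici x₀) hZc.continuousOn
      (fun x hx => ?_) (fun x hx => ?_)
    · rw [interior_Ici] at hx
      exact ((hId x).sub (hEd x hx)).differentiableAt.differentiableWithinAt
    · rw [interior_Ici] at hx
      rw [(show HasDerivAt Z _ x from (hId x).sub (hEd x hx)).deriv]
      -- scalar inequality
      set p := deriv u x with hp_def
      set q := Real.sqrt (2 * G (u x)) with hq_def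
      set h := F (u x) - u x with hh_def
      set f' := deriv F (u x) with hf'_def
      have hGxpos : 0 < G (u x) := hGpos _ (hx₀ ▸ hu_mono hx) (hult x)
      have hp : 0 ≤ p := hu'0 x
      have hf'0x : 0 ≤ f' := hF'0 _
      have hq : 0 < q := Real.sqrt_pos.2 (by linarith)
      have hq2 : q ^ 2 = 2 * G (u x) := Real.sq_sqrt (by linarith)
      have hqσ : q ≤ σ * p := by
        have h1 : Real.sqrt (2 * G (u x)) ≤ Real.sqrt (σ ^ 2 * p ^ 2) :=
          Real.sqrt_le_sqrt (key x)
        have h2 : σ ^ 2 * p ^ 2 = (σ * p) ^ 2 := by ring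
        rw [h2, Real.sqrt_sq (mul_nonneg hσ.le hp)] at h1
        exact h1
      have habs : h ^ 2 = |h| ^ 2 := (sq_abs h).symm
      have e1' : -(h ^ 2) ≤ (q - 2 * |h|) * q := by
        nlinarith [sq_nonneg (|h| - q), sq_abs h]
      have e1 : -(h ^ 2) / q - q + 2 * |h| ≤ 0 := by
        have := (div_le_iff₀ hq).mpr e1'
        have hqq : (q - 2 * |h|) * q / q = q - 2 * |h| := by field_simp
        linarith [(div_le_iff₀ hq).mpr e1']
      have hE'eq : (1 / (2 * q) * (2 * ((u x - F (u x)) * p))) * (F (u x) - u x)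
          + q * (f' * p - p) + 2 * (|F (u x) - u x| * p)
          = p * (-(h ^ 2) / q - q + 2 * |h|) + q * (f' * p) := by
        have hux : u x - F (u x) = -h := by rw [hh_def]; ring
        rw [hux, ← hh_def]
        field_simp
        ring
      have t1 : p * (-(h ^ 2) / q - q + 2 * |h|) ≤ 0 :=
        mul_nonpos_of_nonneg_of_nonpos hp e1
      have t2 : q * (f' * p) ≤ (σ * p) * (f' * p) :=
        mul_le_mul_of_nonneg_right hqσ (mul_nonneg hf'0x hp)
      have t3 : (σ * p) * (f' * p) = σ * (p ^ 2 * f') := by ring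
      have hgx : g x = σ * (p ^ 2 * f') := rfl
      rw [hE'eq, hgx]
      linarith
  -- E R ≤ σ D for R ≥ x₀
  have hintg : Integrable g := by
    have := hint.const_mul σ
    exact this
  have hER : ∀ R, x₀ ≤ R → E R ≤ σ * D := by
    intro R hR
    have h1 : Z x₀ ≤ Z R := hZmono self_mem_Ici hR hR
    have hZx₀ : Z x₀ = 0 := by
      show (∫ x in x₀..x₀, g x) - E x₀ = 0
      rw [intervalIntegral.integral_same, hEx₀]; ring
    have h2 : (∫ x in x₀..R, g x) ≤ σ * D := by
      rw [intervalIntegral.integral_of_le hR]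
      have h3 : ∫ x in Ioc x₀ R, g x ≤ ∫ x, g x :=
        setIntegral_le_integral hintg (ae_of_all _ hg0)
      have h4 : ∫ x, g x = σ * D := by
        rw [hD_def, hg_def]
        exact integral_const_mul σ _
      linarith
    have h5 : Z R = (∫ x in x₀..R, g x) - E R := rfl
    rw [hZx₀] at h1
    rw [h5] at h1
    linarith
  -- limit of E at +∞
  have hEtend : Tendsto E atTop (nhds (4 * M)) := by
    have h1 : Tendsto (fun x => Real.sqrt (2 * G (u x)) * (F (u x) - u x)) atTop
        (nhds 0) := by
      have hc2 : Continuous (fun t => Real.sqrt (2 * G t) * (F t - t)) :=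
        (Real.continuous_sqrt.comp (continuous_const.mul hGc)).mul
          (hFc.sub continuous_id)
      have := (hc2.tendsto a₂).comp hlim₂
      simpa [hGa₂, hfix₂, Function.comp_def] using this
    have h2 : Tendsto (fun x => 2 * A (u x)) atTop (nhds (2 * (2 * M))) := by
      have := ((hAc.tendsto a₂).comp hlim₂).const_mul 2
      rwa [hAa₂] at this
    have h3 := h1.add h2
    rw [zero_add] at h3
    have h4 : 2 * (2 * M) = 4 * M := by ring
    rw [h4] at h3
    exact h3
  have hfinal : 4 * M ≤ σ * D :=
    le_of_tendsto hEtend (eventually_atTop.2 ⟨x₀, hER⟩)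
  -- conclusion
  rw [hEM]
  have hrw : σ / 4 * (N / M) = σ * N / (4 * M) := by ring
  rw [hrw, div_le_div_iff₀ hpos (by positivity)]
  nlinarith [mul_le_mul_of_nonneg_left hfinal hNpos.le]
end

section
/- In the neural field traveling wave setting with c > 0, assume F is C² and convex–concave (there exists z such that F″(x) ≥ 0 for x ≤ z and F″(x) ≤ 0 for x ≥ z) and that the Ermentrout–McLeod formula holds: c = ( ∫_{a₁}^{a₂} (t − F(t)) dt ) / ( ∫ û′(x)² F′(û(x)) dx ). Then c ≥ ( σ / ( √2 (a₂ − a₁) ) ) · ( ∫_{a₁}^{a₂} (t − F(t)) dt ) / √( ∫_{a₁}^{a} (t − F(t)) dt ). -/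
open MeasureTheory Filter Set

private lemma mono_deriv_nonneg' {f : ℝ → ℝ} (hf : Monotone f) (x : ℝ) : 0 ≤ deriv f x := by
  by_cases h : DifferentiableAt ℝ f x
  · have h1 := hasDerivAt_iff_tendsto_slope.mp h.hasDerivAt
    have h2 : Tendsto (slope f x) (nhdsWithin x (Ioi x)) (nhds (deriv f x)) :=
      h1.mono_left (nhdsWithin_mono x (fun y hy => ne_of_gt hy))
    refine ge_of_tendsto h2 ?_
    filter_upwards [self_mem_nhdsWithin] with y hy
    rw [slope_def_field]
    exact div_nonneg (sub_nonneg.2 (hf (le_of_lt hy))) (sub_nonneg.2 (le_of_lt hy))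
  · simp [deriv_zero_of_not_differentiableAt h]

set_option maxHeartbeats 1000000 in
/-- Lower bound on the wave speed (Proposition 4.2, lower bound): in the neural field
traveling wave setting with two-sided exponential kernel and convex–concave gain `F`,
the Ermentrout–McLeod formula yields
`c ≥ (σ/(√2 (a₂−a₁))) (∫_{a₁}^{a₂} (t−F(t)) dt) / √(∫_{a₁}^{a} (t−F(t)) dt)`. -/
theorem stmt_12
    (σ c : ℝ) (hσ : 0 < σ) (hc : 0 < c)
    (a₁ a a₂ : ℝ) (ha₁ : a₁ < a) (ha₂ : a < a₂)
    (F : ℝ → ℝ) (hF : ContDiff ℝ 2 F) (hF_mono : Monotone F)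
    (hfix₁ : F a₁ = a₁) (hfix : F a = a) (hfix₂ : F a₂ = a₂)
    (hbelow : ∀ t ∈ Ioo a₁ a, F t < t) (habove : ∀ t ∈ Ioo a a₂, t < F t)
    (hcc : ∃ z : ℝ, (∀ x ≤ z, 0 ≤ deriv (deriv F) x) ∧ (∀ x, z ≤ x → deriv (deriv F) x ≤ 0))
    (u : ℝ → ℝ) (hu : ContDiff ℝ 2 u) (hu_mono : StrictMono u)
    (hlim₁ : Tendsto u atBot (nhds a₁)) (hlim₂ : Tendsto u atTop (nhds a₂))
    (hlim₃ : Tendsto (deriv u) atBot (nhds 0)) (hlim₄ : Tendsto (deriv u) atTop (nhds 0))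
    (hprofile : ∀ x, -c * deriv u x =
      -u x + ∫ y, 1 / (2 * σ) * Real.exp (-|x - y| / σ) * F (u y))
    (hprofile2 : ∀ x, σ ^ 2 * deriv (deriv u) x =
      u x - ∫ s in Ioi (0 : ℝ), Real.exp (-s) * F (u (x + c * s)))
    (hint : Integrable (fun x => (deriv u x) ^ 2 * deriv F (u x)))
    (hpos : 0 < ∫ x, (deriv u x) ^ 2 * deriv F (u x))
    (hEM : c = (∫ t in a₁..a₂, (t - F t)) / ∫ x, (deriv u x) ^ 2 * deriv F (u x)) :
    σ / (Real.sqrt 2 * (a₂ - a₁)) *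
      ((∫ t in a₁..a₂, (t - F t)) / Real.sqrt (∫ t in a₁..a, (t - F t))) ≤ c := by
  -- notation
  set N : ℝ := ∫ t in a₁..a₂, (t - F t) with hN_def
  set M : ℝ := ∫ t in a₁..a, (t - F t) with hM_def
  set I : ℝ := ∫ x, (deriv u x) ^ 2 * deriv F (u x) with hI_def
  -- regularity facts
  have hu_diff : Differentiable ℝ u := hu.differentiable (by norm_num)
  have hu_c2 : ContDiff ℝ ((1:ℕ∞)+1) u := by
    have h2 : ContDiff ℝ (1+1 : ℕ) u := by exact_mod_cast hu
    exact_mod_cast h2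
  have hu1 : ContDiff ℝ (1:ℕ∞) (deriv u) := (contDiff_succ_iff_deriv.mp hu_c2).2.2
  have hu'_diff : Differentiable ℝ (deriv u) := hu1.differentiable (by norm_num)
  have hu'_cont : Continuous (deriv u) := hu'_diff.continuous
  have hF_cont : Continuous F := hF.continuous
  have hF_diff : Differentiable ℝ F := hF.differentiable (by norm_num)
  have hF_c2 : ContDiff ℝ ((1:ℕ∞)+1) F := by
    have h2 : ContDiff ℝ (1+1 : ℕ) F := by exact_mod_cast hF
    exact_mod_cast h2
  have hF'_cont : Continuous (deriv F) :=
    ((contDiff_succ_iff_deriv.mp hF_c2).2.2).continuous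
  have hu'_nonneg : ∀ x, 0 ≤ deriv u x := mono_deriv_nonneg' hu_mono.monotone
  have hF'_nonneg : ∀ t, 0 ≤ deriv F t := mono_deriv_nonneg' hF_mono
  -- range of u
  have hu_lb : ∀ x, a₁ ≤ u x := by
    intro x
    refine le_of_tendsto hlim₁ ?_
    filter_upwards [eventually_le_atBot x] with y hy
    exact hu_mono.monotone hy
  have hu_ub : ∀ x, u x ≤ a₂ := by
    intro x
    refine ge_of_tendsto hlim₂ ?_
    filter_upwards [eventually_ge_atTop x] with y hy
    exact hu_mono.monotone hy
  have hFu_lb : ∀ x, a₁ ≤ F (u x) := fun x => hfix₁ ▸ hF_mono (hu_lb x)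
  have hFu_ub : ∀ x, F (u x) ≤ a₂ := fun x => hfix₂ ▸ hF_mono (hu_ub x)
  -- convexity of the kernel comparison: σ² u'' ≤ u - F(u)
  have hexp_int : IntegrableOn (fun s : ℝ => Real.exp (-s)) (Ioi 0) := by
    simpa using exp_neg_integrableOn_Ioi 0 one_pos
  have hbound : ∀ x, IntegrableOn (fun s : ℝ => Real.exp (-s) * F (u (x + c * s))) (Ioi 0) := by
    intro x
    set C : ℝ := max |a₁| |a₂| with hC
    refine Integrable.mono (hexp_int.const_mul C) ?_ ?_
    · exact (Continuous.mul (by continuity) (hF_cont.comp (hu.continuous.comp (by continuity)))).aestronglyMeasurable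
    · refine ae_of_all _ fun s => ?_
      have h1 : |F (u (x + c * s))| ≤ C := by
        rw [abs_le]
        constructor
        · calc -C ≤ -|a₁| := by simp [hC, neg_le_neg_iff]
            _ ≤ a₁ := neg_abs_le a₁
            _ ≤ _ := hFu_lb _
        · calc F (u (x + c*s)) ≤ a₂ := hFu_ub _
            _ ≤ |a₂| := le_abs_self a₂
            _ ≤ C := le_max_right _ _
      have : |Real.exp (-s) * F (u (x + c * s))| = Real.exp (-s) * |F (u (x + c * s))| := by
        rw [abs_mul, abs_of_pos (Real.exp_pos _)]
      rw [Real.norm_eq_abs, this, Real.norm_eq_abs]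
      calc Real.exp (-s) * |F (u (x + c * s))| ≤ Real.exp (-s) * C :=
            mul_le_mul_of_nonneg_left h1 (Real.exp_pos _).le
        _ ≤ |C * Real.exp (-s)| := by rw [mul_comm]; exact le_abs_self _
  have hupp : ∀ x, σ ^ 2 * deriv (deriv u) x ≤ u x - F (u x) := by
    intro x
    rw [hprofile2 x]
    have h1 : (∫ s in Ioi (0:ℝ), Real.exp (-s) * F (u x)) = F (u x) := by
      rw [MeasureTheory.integral_mul_const, integral_exp_neg_Ioi_zero, one_mul]
    have h2 : F (u x) ≤ ∫ s in Ioi (0:ℝ), Real.exp (-s) * F (u (x + c * s)) := by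
      rw [← h1]
      refine setIntegral_mono_on (hexp_int.mul_const (F (u x))) (hbound x)
        measurableSet_Ioi ?_
      intro s hs
      have hxs : x ≤ x + c * s := by nlinarith [mem_Ioi.mp hs]
      exact mul_le_mul_of_nonneg_left (hF_mono (hu_mono.monotone hxs)) (Real.exp_pos _).le
    linarith
  -- the potential G
  have hcont_h : Continuous (fun t : ℝ => t - F t) := continuous_id.sub hF_cont
  set G : ℝ → ℝ := fun v => ∫ t in a₁..v, (t - F t) with hG_def
  have hG_deriv : ∀ v, HasDerivAt G (v - F v) v := fun v =>
    (hcont_h.integral_hasStrictDerivAt a₁ v).hasDerivAt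
  have hG_cont : Continuous G := by
    have : Differentiable ℝ G := fun v => (hG_deriv v).differentiableAt
    exact this.continuous
  have hnn : ∀ t ∈ Icc a₁ a, 0 ≤ t - F t := by
    intro t ht
    rcases eq_or_lt_of_le ht.1 with h | h
    · simp [← h, hfix₁]
    rcases eq_or_lt_of_le ht.2 with h' | h'
    · simp [h', hfix]
    · exact le_of_lt (sub_pos.2 (hbelow t ⟨h, h'⟩))
  have hnp : ∀ t ∈ Icc a a₂, t - F t ≤ 0 := by
    intro t ht
    rcases eq_or_lt_of_le ht.1 with h | h
    · simp [← h, hfix]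
    rcases eq_or_lt_of_le ht.2 with h' | h'
    · simp [h', hfix₂]
    · exact le_of_lt (sub_neg.2 (habove t ⟨h, h'⟩))
  have hM_pos : 0 < M := by
    refine intervalIntegral.intervalIntegral_pos_of_pos_on
      (hcont_h.intervalIntegrable _ _) (fun t ht => sub_pos.2 (hbelow t ht)) ha₁
  have hGle : ∀ x, G (u x) ≤ M := by
    intro x
    have hMa : G a = M := rfl
    rcases le_total (u x) a with h | h
    · have hadd : G (u x) + (∫ t in (u x)..a, (t - F t)) = G a :=
        intervalIntegral.integral_add_adjacent_intervals
          (hcont_h.intervalIntegrable _ _) (hcont_h.intervalIntegrable _ _)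
      have h0 : 0 ≤ ∫ t in (u x)..a, (t - F t) :=
        intervalIntegral.integral_nonneg h
          (fun t ht => hnn t ⟨le_trans (hu_lb x) ht.1, ht.2⟩)
      linarith
    · have hadd : G a + (∫ t in a..(u x), (t - F t)) = G (u x) :=
        intervalIntegral.integral_add_adjacent_intervals
          (hcont_h.intervalIntegrable _ _) (hcont_h.intervalIntegrable _ _)
      have h0 : 0 ≤ ∫ t in a..(u x), (F t - t) :=
        intervalIntegral.integral_nonneg h
          (fun t ht => by have := hnp t ⟨ht.1, le_trans ht.2 (hu_ub x)⟩; linarith)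
      have hneg : (∫ t in a..(u x), (F t - t)) = - ∫ t in a..(u x), (t - F t) := by
        rw [← intervalIntegral.integral_neg]
        congr 1
        ext t
        ring
      rw [hneg] at h0
      linarith
  -- the energy functional
  set E : ℝ → ℝ := fun x => σ ^ 2 * (deriv u x) ^ 2 / 2 - G (u x) with hE_def
  have hE_hasDeriv : ∀ x, HasDerivAt E
      (σ ^ 2 * (2 * deriv u x * deriv (deriv u) x) / 2 - (u x - F (u x)) * deriv u x) x := by
    intro x
    have h1 : HasDerivAt (fun x => (deriv u x) ^ 2)
        (2 * deriv u x * deriv (deriv u) x) x := by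
      have := (hu'_diff x).hasDerivAt.pow 2
      norm_num at this
      exact this.congr_deriv (by ring)
    have h2 : HasDerivAt (fun x => G (u x)) ((u x - F (u x)) * deriv u x) x :=
      (hG_deriv (u x)).comp x (hu_diff x).hasDerivAt
    exact ((h1.const_mul (σ ^ 2)).div_const 2).sub h2
  have hE'_nonpos : ∀ x, deriv E x ≤ 0 := by
    intro x
    rw [(hE_hasDeriv x).deriv]
    have h3 := mul_le_mul_of_nonneg_left (hupp x) (hu'_nonneg x)
    nlinarith [hu'_nonneg x]
  have hE_anti : Antitone E :=
    antitone_of_deriv_nonpos (fun x => (hE_hasDeriv x).differentiableAt) hE'_nonpos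
  have hGa₁ : G a₁ = 0 := intervalIntegral.integral_same
  have hE_lim : Tendsto E atBot (nhds 0) := by
    have t1 : Tendsto (fun x => σ ^ 2 * (deriv u x) ^ 2 / 2) atBot
        (nhds (σ ^ 2 * (0:ℝ) ^ 2 / 2)) := ((hlim₃.pow 2).const_mul _).div_const 2
    have t2 : Tendsto (fun x => G (u x)) atBot (nhds (G a₁)) :=
      (hG_cont.tendsto a₁).comp hlim₁
    have := t1.sub t2
    simpa [hGa₁] using this
  have hE_nonpos : ∀ x, E x ≤ 0 := by
    intro x
    refine ge_of_tendsto hE_lim ?_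
    filter_upwards [eventually_le_atBot x] with y hy
    exact hE_anti hy
  -- pointwise bound on u'
  set K : ℝ := Real.sqrt 2 * Real.sqrt M / σ with hK_def
  have hsM : 0 < Real.sqrt M := Real.sqrt_pos.mpr hM_pos
  have hK_pos : 0 < K := by positivity
  have hK : ∀ x, deriv u x ≤ K := by
    intro x
    have h1 : σ ^ 2 * (deriv u x) ^ 2 / 2 ≤ M := by
      have hE := hE_nonpos x
      have := hGle x
      simp only [hE_def] at hE
      linarith
    have h2 : (deriv u x) ^ 2 ≤ 2 * M / σ ^ 2 := by
      rw [le_div_iff₀ (by positivity)]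
      nlinarith
    have h3 : deriv u x ≤ Real.sqrt (2 * M / σ ^ 2) := Real.le_sqrt_of_sq_le h2
    have h4 : Real.sqrt (2 * M / σ ^ 2) = K := by
      rw [show 2 * M / σ ^ 2 = K ^ 2 by
        rw [hK_def, div_pow, mul_pow, Real.sq_sqrt (by norm_num : (0:ℝ) ≤ 2),
          Real.sq_sqrt hM_pos.le]
        try ring]
      exact Real.sqrt_sq hK_pos.le
    linarith [h4 ▸ h3]
  -- chain rule for F ∘ u
  have hg_deriv : ∀ x, HasDerivAt (fun y => F (u y)) (deriv F (u x) * deriv u x) x :=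
    fun x => ((hF_diff (u x)).hasDerivAt).comp x (hu_diff x).hasDerivAt
  have hg'_cont : Continuous (fun x => deriv F (u x) * deriv u x) :=
    (hF'_cont.comp hu.continuous).mul hu'_cont
  have hIbound : ∀ R : ℝ, 0 ≤ R →
      (∫ x in (-R)..R, (deriv u x) ^ 2 * deriv F (u x)) ≤ K * (a₂ - a₁) := by
    intro R hR0
    have hR : -R ≤ R := by linarith
    have hmono : ∀ x ∈ Icc (-R) R,
        (deriv u x) ^ 2 * deriv F (u x) ≤ K * (deriv F (u x) * deriv u x) := by
      intro x _
      have h1 := hK x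
      have h2 := hu'_nonneg x
      have h3 := hF'_nonneg (u x)
      nlinarith [mul_le_mul_of_nonneg_right h1 (mul_nonneg h3 h2)]
    have hle := intervalIntegral.integral_mono_on (μ := volume) hR
      (((hu'_cont.pow 2).mul (hF'_cont.comp hu.continuous)).intervalIntegrable _ _)
      ((continuous_const.mul hg'_cont).intervalIntegrable _ _) hmono
    have heq : (∫ x in (-R)..R, K * (deriv F (u x) * deriv u x))
        = K * (F (u R) - F (u (-R))) := by
      rw [intervalIntegral.integral_const_mul,
        intervalIntegral.integral_eq_sub_of_hasDerivAt (fun x _ => hg_deriv x)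
          (hg'_cont.intervalIntegrable _ _)]
    have hfin : F (u R) - F (u (-R)) ≤ a₂ - a₁ := by
      have := hFu_ub R
      have := hFu_lb (-R)
      linarith
    calc (∫ x in (-R)..R, (deriv u x) ^ 2 * deriv F (u x))
        ≤ ∫ x in (-R)..R, K * (deriv F (u x) * deriv u x) := hle
      _ = K * (F (u R) - F (u (-R))) := heq
      _ ≤ K * (a₂ - a₁) := mul_le_mul_of_nonneg_left hfin hK_pos.le
  have hI_le : I ≤ K * (a₂ - a₁) := by
    have ht := MeasureTheory.intervalIntegral_tendsto_integral hint
      tendsto_neg_atTop_atBot tendsto_id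
    refine le_of_tendsto ht ?_
    filter_upwards [eventually_ge_atTop (0:ℝ)] with R hR
    exact hIbound R hR
  -- final algebra
  have hN : N = c * I := by
    rw [hEM]
    field_simp
  have hN_pos : 0 < N := hN ▸ mul_pos hc hpos
  have hIK_pos : 0 < K * (a₂ - a₁) := lt_of_lt_of_le hpos hI_le
  have key : σ / (Real.sqrt 2 * (a₂ - a₁)) * (N / Real.sqrt M) = N / (K * (a₂ - a₁)) := by
    rw [hK_def]
    field_simp
  rw [hEM, key]
  exact div_le_div_of_nonneg_left hN_pos.le hpos hI_le
end

section
/- In the neural field traveling wave setting with c ≥ 0 (using only: F continuous and nondecreasing, û ∈ C² strictly increasing with lim_{x→+∞}û = a₂ and lim_{x→+∞}û′ = 0, and σ²û″(x) = û(x) − ∫₀^∞ e^{−s}F(û(x+cs))ds for all x), for every x ∈ ℝ: û′(x)² ≥ (2/σ²) ∫_{û(x)}^{a₂} ( F(t) − t ) dt. -/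
open MeasureTheory Filter Set

/-- Pointwise lower bound on the slope of the traveling wave profile (used in the proof of
Proposition 4.2): `û′(x)² ≥ (2/σ²) ∫_{û(x)}^{a₂} (F(t) − t) dt`. -/
theorem stmt_13
    (σ c : ℝ) (hσ : 0 < σ) (hc : 0 ≤ c)
    (a₂ : ℝ)
    (F : ℝ → ℝ) (hF_cont : Continuous F) (hF_mono : Monotone F)
    (u : ℝ → ℝ) (hu : ContDiff ℝ 2 u) (hu_mono : StrictMono u)
    (hlim : Tendsto u atTop (nhds a₂)) (hlim' : Tendsto (deriv u) atTop (nhds 0))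
    (hprofile : ∀ x, σ ^ 2 * deriv (deriv u) x =
      u x - ∫ s in Ioi (0 : ℝ), Real.exp (-s) * F (u (x + c * s))) :
    ∀ x, 2 / σ ^ 2 * ∫ t in (u x)..a₂, (F t - t) ≤ (deriv u x) ^ 2 := by
  have hσ2 : (0:ℝ) < σ ^ 2 := by positivity
  -- u is bounded above by a₂
  have hub : ∀ y, u y ≤ a₂ := fun y => hu_mono.monotone.ge_of_tendsto hlim y
  -- differentiability facts
  have hud : Differentiable ℝ u := hu.differentiable (by norm_num)
  have hu1 : ContDiff ℝ 1 (deriv u) := by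
    have := (contDiff_succ_iff_deriv (n := 1)).mp (by exact_mod_cast hu)
    exact this.2.2
  have hud' : Differentiable ℝ (deriv u) := hu1.differentiable (by norm_num)
  -- deriv u ≥ 0
  have hderiv_nonneg : ∀ x, 0 ≤ deriv u x := by
    intro x
    have h := (hud x).hasDerivAt
    have ht : Tendsto (slope u x) (nhdsWithin x (Ioi x)) (nhds (deriv u x)) :=
      (hasDerivAt_iff_tendsto_slope.mp h).mono_left
        (nhdsWithin_mono x (fun y hy => ne_of_gt hy))
    refine ge_of_tendsto ht ?_
    filter_upwards [self_mem_nhdsWithin] with y hy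
    have h1 : u x ≤ u y := (hu_mono hy).le
    rw [slope_def_field]
    have hy' : x < y := hy
    exact div_nonneg (by linarith) (by linarith)
  -- key inequality : σ² u'' ≤ u - F ∘ u
  have hkey : ∀ x, σ ^ 2 * deriv (deriv u) x ≤ u x - F (u x) := by
    intro x
    rw [hprofile x]
    have hexp : IntegrableOn (fun s => Real.exp (-s)) (Ioi (0:ℝ)) := by
      simpa using exp_neg_integrableOn_Ioi 0 (one_pos)
    have hint1 : IntegrableOn (fun s => Real.exp (-s) * F (u x)) (Ioi (0:ℝ)) :=
      hexp.mul_const _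
    have hint2 : IntegrableOn (fun s => Real.exp (-s) * F (u (x + c * s))) (Ioi (0:ℝ)) := by
      apply (hexp.const_mul (|F (u x)| + |F a₂|)).mono'
      · exact (((Real.continuous_exp.comp continuous_neg).mul
          (hF_cont.comp (hud.continuous.comp (by continuity)))).aestronglyMeasurable).restrict
      · filter_upwards [ae_restrict_mem measurableSet_Ioi] with s hs
        have hs0 : (0:ℝ) ≤ s := le_of_lt hs
        have h1 : u x ≤ u (x + c * s) :=
          hu_mono.monotone (le_add_of_nonneg_right (by positivity))
        have h2 : F (u x) ≤ F (u (x + c * s)) := hF_mono h1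
        have h3 : F (u (x + c * s)) ≤ F a₂ := hF_mono (hub _)
        have habs : |F (u (x + c * s))| ≤ |F (u x)| + |F a₂| := by
          rw [abs_le]
          constructor
          · nlinarith [neg_abs_le (F (u x)), neg_abs_le (F a₂), abs_nonneg (F a₂)]
          · nlinarith [le_abs_self (F a₂), abs_nonneg (F (u x))]
        have := Real.exp_pos (-s)
        rw [norm_mul, Real.norm_eq_abs, Real.norm_eq_abs, abs_of_pos this]
        calc Real.exp (-s) * |F (u (x + c * s))| ≤ Real.exp (-s) * (|F (u x)| + |F a₂|) := by
              apply mul_le_mul_of_nonneg_left habs this.le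
          _ = (|F (u x)| + |F a₂|) * Real.exp (-s) := mul_comm _ _
    have hmono : (∫ s in Ioi (0:ℝ), Real.exp (-s) * F (u x)) ≤
        ∫ s in Ioi (0:ℝ), Real.exp (-s) * F (u (x + c * s)) := by
      apply setIntegral_mono_on hint1 hint2 measurableSet_Ioi
      intro s hs
      have hs0 : (0:ℝ) ≤ s := le_of_lt hs
      have h1 : u x ≤ u (x + c * s) :=
        hu_mono.monotone (le_add_of_nonneg_right (by positivity))
      exact mul_le_mul_of_nonneg_left (hF_mono h1) (Real.exp_pos (-s)).le
    have heq : (∫ s in Ioi (0:ℝ), Real.exp (-s) * F (u x)) = F (u x) := by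
      rw [MeasureTheory.integral_mul_const, integral_exp_neg_Ioi_zero, one_mul]
    linarith [heq ▸ hmono]
  -- the energy function
  set g : ℝ → ℝ := fun t => F t - t with hg
  have hg_cont : Continuous g := hF_cont.sub continuous_id
  set G : ℝ → ℝ := fun y => ∫ t in a₂..y, g t with hG
  have hGderiv : ∀ y, HasDerivAt G (g y) y := fun y =>
    intervalIntegral.integral_hasDerivAt_right (hg_cont.intervalIntegrable _ _)
      (hg_cont.stronglyMeasurableAtFilter _ _) hg_cont.continuousAt
  have hG_cont : Continuous G := by
    rw [continuous_iff_continuousAt]; exact fun y => (hGderiv y).continuousAt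
  set h : ℝ → ℝ := fun x => σ ^ 2 / 2 * (deriv u x) ^ 2 + G (u x) with hh
  have hhderiv : ∀ x, HasDerivAt h
      (σ ^ 2 / 2 * (2 * deriv u x * deriv (deriv u) x) + g (u x) * deriv u x) x := by
    intro x
    have h1 : HasDerivAt (fun x => (deriv u x) ^ 2) (2 * deriv u x * deriv (deriv u) x) x := by
      have := ((hud' x).hasDerivAt).fun_pow 2
      simpa [mul_comm, mul_assoc, mul_left_comm] using this
    have h2 : HasDerivAt (fun x => G (u x)) (g (u x) * deriv u x) x :=
      (hGderiv (u x)).comp x (hud x).hasDerivAt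
    exact ((h1.const_mul (σ ^ 2 / 2)).add h2)
  have hh_anti : Antitone h := by
    apply antitone_of_deriv_nonpos
    · exact fun x => (hhderiv x).differentiableAt
    · intro x
      rw [(hhderiv x).deriv]
      have := hkey x
      have hd := hderiv_nonneg x
      have : σ ^ 2 / 2 * (2 * deriv u x * deriv (deriv u) x) + g (u x) * deriv u x
          = deriv u x * (σ ^ 2 * deriv (deriv u) x + (F (u x) - u x)) := by
        simp only [hg]; ring
      rw [this]
      apply mul_nonpos_of_nonneg_of_nonpos hd
      linarith [hkey x]
  -- h tends to 0 at top
  have hh_lim : Tendsto h atTop (nhds 0) := by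
    have h1 : Tendsto (fun x => σ ^ 2 / 2 * (deriv u x) ^ 2) atTop (nhds 0) := by
      have := (hlim'.pow 2).const_mul (σ ^ 2 / 2)
      simpa using this
    have h2 : Tendsto (fun x => G (u x)) atTop (nhds (G a₂)) :=
      (hG_cont.continuousAt.tendsto).comp hlim
    have hGa₂ : G a₂ = 0 := by simp [hG]
    have := h1.add h2
    rw [hGa₂] at this
    simpa using this
  -- conclude h x ≥ 0
  intro x
  have hx0 : 0 ≤ h x := by
    apply le_of_tendsto hh_lim
    filter_upwards [eventually_ge_atTop x] with y hy
    exact hh_anti hy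
  have hGint : G (u x) = - ∫ t in (u x)..a₂, g t := by
    rw [hG]
    exact (intervalIntegral.integral_symm _ _)
  have : (∫ t in (u x)..a₂, g t) ≤ σ ^ 2 / 2 * (deriv u x) ^ 2 := by
    have h2 : 0 ≤ σ ^ 2 / 2 * (deriv u x) ^ 2 + G (u x) := hx0
    rw [hGint] at h2
    linarith
  rw [div_mul_eq_mul_div, div_le_iff₀ hσ2]
  calc 2 * ∫ t in (u x)..a₂, (F t - t) ≤ 2 * (σ ^ 2 / 2 * (deriv u x) ^ 2) := by
        apply mul_le_mul_of_nonneg_left _ (by norm_num); exact this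
    _ = (deriv u x) ^ 2 * σ ^ 2 := by ring
end

section
/- In the neural field traveling wave setting, assume c > 0, F is continuous and strictly increasing on (a₁,a₂), û is strictly increasing with range contained in (a₁,a₂), F(t) ≥ t for all t ∈ [a, a₂), and σ²û″(x) = û(x) − ∫₀^∞ e^{−s}F(û(x+cs))ds for all x. If x₀ ∈ ℝ satisfies û″(x₀) = 0, then F(û(x₀)) < û(x₀) and consequently û(x₀) < a. -/
open MeasureTheory Filter Set

/-- At an inflection point `x₀` of the (strictly increasing) traveling wave profile with
positive wave speed, `F(û(x₀)) < û(x₀)`, and consequently `û(x₀) < a`. -/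
theorem stmt_15
    (σ c : ℝ) (hσ : 0 < σ) (hc : 0 < c)
    (a₁ a a₂ : ℝ) (ha₁ : a₁ < a) (ha₂ : a < a₂)
    (F : ℝ → ℝ) (hF_cont : Continuous F) (hF_mono : StrictMonoOn F (Ioo a₁ a₂))
    (hFge : ∀ t, a ≤ t → t < a₂ → t ≤ F t)
    (u : ℝ → ℝ) (hu : ContDiff ℝ 2 u) (hu_mono : StrictMono u)
    (hrange : ∀ x, u x ∈ Ioo a₁ a₂)
    (hprofile : ∀ x, σ ^ 2 * deriv (deriv u) x =
      u x - ∫ s in Ioi (0 : ℝ), Real.exp (-s) * F (u (x + c * s)))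
    (x₀ : ℝ) (hx₀ : deriv (deriv u) x₀ = 0) :
    F (u x₀) < u x₀ ∧ u x₀ < a := by
  -- F is bounded on [a₁, a₂]
  obtain ⟨M, hM⟩ := (isCompact_Icc (a := a₁) (b := a₂)).exists_bound_of_continuousOn
    hF_cont.continuousOn
  have hMu : ∀ x, ‖F (u x)‖ ≤ M := fun x => hM _ ⟨(hrange x).1.le, (hrange x).2.le⟩
  have hucont : Continuous u := hu.continuous
  have hexp : IntegrableOn (fun s => Real.exp (-s)) (Ioi (0:ℝ)) := by
    simpa using exp_neg_integrableOn_Ioi 0 one_pos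
  have hg_int : IntegrableOn (fun s => Real.exp (-s) * F (u (x₀ + c * s))) (Ioi (0:ℝ)) := by
    apply Integrable.mono (hexp.const_mul M)
    · exact (Continuous.aestronglyMeasurable (by continuity)).restrict
    · filter_upwards with s
      rw [norm_mul, Real.norm_eq_abs (Real.exp _), abs_of_pos (Real.exp_pos _)]
      have h1 : ‖F (u (x₀ + c * s))‖ ≤ M := hMu _
      have h0 : (0:ℝ) ≤ M := le_trans (norm_nonneg _) (hMu x₀)
      rw [norm_mul, Real.norm_eq_abs (Real.exp _), abs_of_pos (Real.exp_pos _),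
        Real.norm_eq_abs M, abs_of_nonneg h0]
      nlinarith [Real.exp_pos (-s)]
  have hh_int : IntegrableOn (fun s => Real.exp (-s) * F (u x₀)) (Ioi (0:ℝ)) :=
    hexp.mul_const _
  have hh_val : (∫ s in Ioi (0:ℝ), Real.exp (-s) * F (u x₀)) = F (u x₀) := by
    rw [integral_mul_const, integral_exp_neg_Ioi_zero, one_mul]
  -- the integral equals u x₀
  have hg_val : (∫ s in Ioi (0:ℝ), Real.exp (-s) * F (u (x₀ + c * s))) = u x₀ := by
    have := hprofile x₀
    rw [hx₀, mul_zero] at this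
    linarith
  -- positivity of the difference
  have hpos : 0 < ∫ s in Ioi (0:ℝ),
      (Real.exp (-s) * F (u (x₀ + c * s)) - Real.exp (-s) * F (u x₀)) := by
    have hfi : IntegrableOn (fun s => Real.exp (-s) * F (u (x₀ + c * s))
        - Real.exp (-s) * F (u x₀)) (Ioi (0:ℝ)) := hg_int.sub hh_int
    have hkey : ∀ s ∈ Ioi (0:ℝ), 0 < Real.exp (-s) * F (u (x₀ + c * s))
        - Real.exp (-s) * F (u x₀) := by
      intro s hs
      have hlt : u x₀ < u (x₀ + c * s) := hu_mono (by nlinarith [hs.out])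
      have hF : F (u x₀) < F (u (x₀ + c * s)) := hF_mono (hrange _) (hrange _) hlt
      nlinarith [Real.exp_pos (-s)]
    rw [setIntegral_pos_iff_support_of_nonneg_ae
      ((ae_restrict_iff' measurableSet_Ioi).2 (ae_of_all _ fun s hs => (hkey s hs).le)) hfi]
    have hsub : Ioi (0:ℝ) ⊆ Function.support (fun s => Real.exp (-s) * F (u (x₀ + c * s))
        - Real.exp (-s) * F (u x₀)) ∩ Ioi (0:ℝ) :=
      fun s hs => ⟨ne_of_gt (hkey s hs), hs⟩
    calc (0:ENNReal) < volume (Ioi (0:ℝ)) := by rw [Real.volume_Ioi]; exact ENNReal.zero_lt_top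
      _ ≤ _ := measure_mono hsub
  rw [integral_sub hg_int hh_int, hg_val, hh_val, sub_pos] at hpos
  refine ⟨hpos, ?_⟩
  by_contra h
  push_neg at h
  exact absurd (hFge _ h (hrange x₀).2) (not_le.2 hpos)
end

section
/- Let w(x) = (1/(2σ))e^{−|x|/σ} with σ > 0, let F be C¹ with F′ ≥ 0, and let û ∈ C²(ℝ) satisfy û′ > 0, |û″(x)| ≤ (1/σ) û′(x) for all x, and the differentiated traveling wave identity (w∗(F′(û)û′))(x) = û′(x) − c û″(x) for all x. If x₀ ∈ ℝ satisfies û″(x₀) = 0, then ∫ û′(x)² F′(û(x)) dx ≥ 2σ û′(x₀)². -/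
open MeasureTheory Filter Set

/-- Lower bound on the denominator of the Ermentrout–McLeod wave speed formula in terms of
the slope at an inflection point `x₀`: `∫ û′² F′(û) dx ≥ 2σ û′(x₀)²`, for the two-sided
exponential kernel `w(x) = (1/(2σ)) e^{−|x|/σ}`. -/
theorem stmt_16
    (σ c : ℝ) (hσ : 0 < σ)
    (F : ℝ → ℝ) (hF : ContDiff ℝ 1 F) (hF' : ∀ x, 0 ≤ deriv F x)
    (u : ℝ → ℝ) (hu : ContDiff ℝ 2 u) (hu' : ∀ x, 0 < deriv u x)
    (hbend : ∀ x, |deriv (deriv u) x| ≤ 1 / σ * deriv u x)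
    (hident : ∀ x, (∫ y, 1 / (2 * σ) * Real.exp (-|x - y| / σ) *
        (deriv F (u y) * deriv u y)) = deriv u x - c * deriv (deriv u) x)
    (hint : Integrable (fun x => (deriv u x) ^ 2 * deriv F (u x)))
    (x₀ : ℝ) (hx₀ : deriv (deriv u) x₀ = 0) :
    2 * σ * (deriv u x₀) ^ 2 ≤ ∫ x, (deriv u x) ^ 2 * deriv F (u x) := by
  set f := deriv u with hfdef
  have hfd : Differentiable ℝ f := by
    have h2 : ContDiff ℝ (1 + 1) u := by norm_num; exact hu
    have := (contDiff_succ_iff_deriv.mp h2).2.2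
    exact this.differentiable one_ne_zero
  -- exponential lower bound on the slope
  have key : ∀ y, Real.exp (-|x₀ - y| / σ) * f x₀ ≤ f y := by
    intro y
    have hlog : ∀ x ∈ (univ : Set ℝ),
        HasDerivWithinAt (fun t => Real.log (f t)) (deriv f x / f x) univ x := by
      intro x _
      exact ((hfd x).hasDerivAt.log (ne_of_gt (hu' x))).hasDerivWithinAt
    have bound : ∀ x ∈ (univ : Set ℝ), ‖deriv f x / f x‖ ≤ 1 / σ := by
      intro x _
      rw [Real.norm_eq_abs, abs_div, abs_of_pos (hu' x), div_le_iff₀ (hu' x)]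
      exact hbend x
    have h := convex_univ.norm_image_sub_le_of_norm_hasDerivWithin_le hlog bound
      (mem_univ x₀) (mem_univ y)
    have h1 : Real.log (f x₀) - Real.log (f y) ≤ σ⁻¹ * |y - x₀| := by
      have := (abs_le.mp (by simpa [Real.norm_eq_abs] using h)).1
      linarith
    have h2 : Real.log (f x₀) + (-|x₀ - y| / σ) ≤ Real.log (f y) := by
      rw [abs_sub_comm] at h1
      have e : |x₀ - y| / σ = σ⁻¹ * |x₀ - y| := by ring
      rw [neg_div, e]
      linarith
    calc Real.exp (-|x₀ - y| / σ) * f x₀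
        = Real.exp (Real.log (f x₀) + (-|x₀ - y| / σ)) := by
          rw [Real.exp_add, Real.exp_log (hu' x₀)]; ring
      _ ≤ Real.exp (Real.log (f y)) := Real.exp_le_exp.mpr h2
      _ = f y := Real.exp_log (hu' y)
  -- the integral identity at x₀
  have hval : (∫ y, 1 / (2 * σ) * Real.exp (-|x₀ - y| / σ) *
      (deriv F (u y) * f y)) = f x₀ := by
    have := hident x₀
    rw [hx₀] at this
    simpa using this
  have hpos : 0 < f x₀ := hu' x₀
  have hInt : Integrable (fun y => 1 / (2 * σ) * Real.exp (-|x₀ - y| / σ) *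
      (deriv F (u y) * f y)) := by
    by_contra hc
    rw [integral_undef hc] at hval
    exact absurd hval.symm (ne_of_gt hpos)
  -- pointwise comparison
  have hpt : ∀ y, 2 * σ * f x₀ * (1 / (2 * σ) * Real.exp (-|x₀ - y| / σ) *
      (deriv F (u y) * f y)) ≤ (f y) ^ 2 * deriv F (u y) := by
    intro y
    have hne : (2 * σ) ≠ 0 := by positivity
    have e1 : 2 * σ * f x₀ * (1 / (2 * σ) * Real.exp (-|x₀ - y| / σ) *
        (deriv F (u y) * f y))
        = (Real.exp (-|x₀ - y| / σ) * f x₀) * (f y * deriv F (u y)) := by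
      field_simp
    rw [e1, pow_two]
    have h0 : 0 ≤ f y * deriv F (u y) := mul_nonneg (hu' y).le (hF' (u y))
    have := mul_le_mul_of_nonneg_right (key y) h0
    calc Real.exp (-|x₀ - y| / σ) * f x₀ * (f y * deriv F (u y))
        ≤ f y * (f y * deriv F (u y)) := this
      _ = f y * f y * deriv F (u y) := by ring
  calc 2 * σ * (f x₀) ^ 2
      = 2 * σ * f x₀ * (∫ y, 1 / (2 * σ) * Real.exp (-|x₀ - y| / σ) *
          (deriv F (u y) * f y)) := by rw [hval]; ring
    _ = ∫ y, 2 * σ * f x₀ * (1 / (2 * σ) * Real.exp (-|x₀ - y| / σ) *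
          (deriv F (u y) * f y)) := (integral_const_mul _ _).symm
    _ ≤ ∫ x, (f x) ^ 2 * deriv F (u x) :=
        integral_mono (hInt.const_mul _) hint hpt
end

section
/- Let F ∈ C²(ℝ) with ‖F″‖_∞ < ∞, let w ≥ 0 be a bounded probability density (∫ w dx = 1, ‖w‖_∞ < ∞), let 𝔪 : ℝ → (0,∞) satisfy ‖𝔪‖_∞ < ∞ and inf 𝔪 > 0, let û : ℝ → ℝ be measurable, and let v ∈ L²(ℝ). Define the Taylor rest term R(x) = ∫ w(x−y) [ F(û(y)+v(y)) − F(û(y)) − F′(û(y))v(y) ] dy. Then ∫ R(x)² 𝔪(x) dx ≤ (1/4) ‖w‖_∞ ‖F″‖²_∞ ( ‖𝔪‖_∞ / (inf 𝔪)² ) ( ∫ v(x)² 𝔪(x) dx )². -/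
open MeasureTheory Filter

lemma taylor2 {F : ℝ → ℝ} (hF : ContDiff ℝ 2 F) {B : ℝ}
    (hB : ∀ x, |deriv (deriv F) x| ≤ B) (a h : ℝ) :
    |F (a + h) - F a - deriv F a * h| ≤ B / 2 * h ^ 2 := by
  have hFd : Differentiable ℝ F := hF.differentiable (by norm_num)
  have hF1 : ContDiff ℝ 1 (deriv F) :=
    (contDiff_succ_iff_deriv.mp (show ContDiff ℝ (1 + 1) F by norm_num [hF])).2.2
  have hF'd : Differentiable ℝ (deriv F) := hF1.differentiable one_ne_zero
  have hF'c : Continuous (deriv F) := hF1.continuous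
  have lip : ∀ p q : ℝ, |deriv F p - deriv F q| ≤ B * |p - q| := by
    intro p q
    have := Convex.norm_image_sub_le_of_norm_deriv_le (f := deriv F) (C := B)
      (fun x _ => hF'd x) (fun x _ => by simpa [Real.norm_eq_abs] using hB x)
      convex_univ (Set.mem_univ q) (Set.mem_univ p)
    simpa [Real.norm_eq_abs] using this
  have hint : IntervalIntegrable (fun t : ℝ => deriv F (a + t * h) * h) volume 0 1 :=
    ((hF'c.comp (by continuity)).mul continuous_const).intervalIntegrable 0 1
  have key : F (a + h) - F a = ∫ t in (0:ℝ)..1, deriv F (a + t * h) * h := by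
    have hψ : ∀ t ∈ Set.uIcc (0:ℝ) 1,
        HasDerivAt (fun t => F (a + t * h)) (deriv F (a + t * h) * h) t := by
      intro t _
      have h1 : HasDerivAt (fun t : ℝ => a + t * h) h t := by
        simpa using ((hasDerivAt_id t).mul_const h).const_add a
      exact ((hFd (a + t * h)).hasDerivAt.comp t h1)
    have := intervalIntegral.integral_eq_sub_of_hasDerivAt hψ hint
    simpa using this.symm
  have key2 : F (a + h) - F a - deriv F a * h
      = ∫ t in (0:ℝ)..1, (deriv F (a + t * h) - deriv F a) * h := by
    have : (∫ t in (0:ℝ)..1, (deriv F (a + t * h) - deriv F a) * h)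
        = (∫ t in (0:ℝ)..1, deriv F (a + t * h) * h) - ∫ t in (0:ℝ)..1, deriv F a * h := by
      rw [← intervalIntegral.integral_sub hint (intervalIntegrable_const)]
      congr 1; ext t; ring
    rw [this, key, intervalIntegral.integral_const]
    simp
  rw [key2]
  have hb : |∫ t in (0:ℝ)..1, (deriv F (a + t * h) - deriv F a) * h|
      ≤ |∫ t in (0:ℝ)..1, B * t * h ^ 2| := by
    rw [← Real.norm_eq_abs (∫ t in (0:ℝ)..1, (deriv F (a + t * h) - deriv F a) * h)]
    apply intervalIntegral.norm_integral_le_abs_of_norm_le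
    · filter_upwards [ae_restrict_mem measurableSet_uIoc] with t ht
      have ht' : 0 < t ∧ t ≤ 1 := by
        simpa [Set.uIoc_of_le (zero_le_one (α := ℝ))] using ht
      rw [Real.norm_eq_abs, abs_mul]
      have h1 : |deriv F (a + t * h) - deriv F a| ≤ B * (t * |h|) := by
        have := lip (a + t * h) a
        simpa [abs_mul, abs_of_pos ht'.1, mul_assoc] using this
      calc |deriv F (a + t * h) - deriv F a| * |h| ≤ B * (t * |h|) * |h| :=
            mul_le_mul_of_nonneg_right h1 (abs_nonneg _)
        _ = B * t * h ^ 2 := by rw [show B * (t * |h|) * |h| = B * t * (|h| * |h|) by ring,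
              ← abs_mul, ← sq, abs_of_nonneg (sq_nonneg h)]
    · exact ((continuous_const.mul continuous_id).mul continuous_const).intervalIntegrable 0 1
  have hc : (∫ t in (0:ℝ)..1, B * t * h ^ 2) = B / 2 * h ^ 2 := by
    have : (∫ t in (0:ℝ)..1, B * t * h ^ 2) = (B * h ^ 2) * ∫ t in (0:ℝ)..1, t := by
      rw [← intervalIntegral.integral_const_mul]
      congr 1; ext t; ring
    rw [this, integral_id]; ring
  rw [hc] at hb
  refine hb.trans ?_
  rw [abs_of_nonneg]
  have hB0 : 0 ≤ B := le_trans (abs_nonneg _) (hB 0)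
  positivity

/-- Estimate (4.3) on the Taylor rest term
`R(x) = ∫ w(x−y)[F(û(y)+v(y)) − F(û(y)) − F′(û(y))v(y)] dy`:
`∫ R² 𝔪 dx ≤ (1/4)‖w‖_∞‖F″‖²_∞ (‖𝔪‖_∞/(inf 𝔪)²) (∫ v² 𝔪 dx)²`. -/
theorem stmt_17
    (F : ℝ → ℝ) (hF : ContDiff ℝ 2 F)
    (B : ℝ) (hB : ∀ x, |deriv (deriv F) x| ≤ B)
    (w : ℝ → ℝ) (hw_meas : Measurable w) (hw_nonneg : ∀ x, 0 ≤ w x)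
    (hw_int : Integrable w) (hw_prob : (∫ x, w x) = 1)
    (Cw : ℝ) (hCw : ∀ x, w x ≤ Cw)
    (m : ℝ → ℝ) (hm_meas : Measurable m) (hm_pos : ∀ x, 0 < m x)
    (m₀ m₁ : ℝ) (hm₀ : 0 < m₀) (hm_lower : ∀ x, m₀ ≤ m x) (hm_upper : ∀ x, m x ≤ m₁)
    (u : ℝ → ℝ) (hu_meas : Measurable u)
    (v : ℝ → ℝ) (hv_meas : Measurable v) (hv : MemLp v 2 volume) :
    (∫ x, (∫ y, w (x - y) * (F (u y + v y) - F (u y) - deriv F (u y) * v y)) ^ 2 * m x) ≤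
      1 / 4 * Cw * B ^ 2 * (m₁ / m₀ ^ 2) * (∫ x, (v x) ^ 2 * m x) ^ 2 := by
  have hB0 : 0 ≤ B := le_trans (abs_nonneg _) (hB 0)
  have hCw0 : 0 ≤ Cw := le_trans (hw_nonneg 0) (hCw 0)
  have hm₁0 : 0 < m₁ := lt_of_lt_of_le hm₀ ((hm_lower 0).trans (hm_upper 0))
  set g : ℝ → ℝ := fun y => F (u y + v y) - F (u y) - deriv F (u y) * v y with hg_def
  have hFc : Continuous F := hF.continuous
  have hF'c : Continuous (deriv F) :=
    ((contDiff_succ_iff_deriv.mp (show ContDiff ℝ (1 + 1) F by norm_num [hF])).2.2).continuous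
  have hg_meas : Measurable g := by
    exact ((hFc.measurable.comp (hu_meas.add hv_meas)).sub
      (hFc.measurable.comp hu_meas)).sub ((hF'c.measurable.comp hu_meas).mul hv_meas)
  have hg_bound : ∀ y, |g y| ≤ B / 2 * (v y) ^ 2 := fun y => taylor2 hF hB (u y) (v y)
  have hv2 : Integrable (fun y => (v y) ^ 2) := hv.integrable_sq
  have hq : Integrable (fun y => (v y) ^ 2 * m y) := by
    refine (hv2.const_mul m₁).mono'
      ((hv_meas.pow_const 2).mul hm_meas).aestronglyMeasurable (ae_of_all _ fun y => ?_)
    rw [Real.norm_eq_abs, abs_mul, abs_of_nonneg (sq_nonneg _), abs_of_pos (hm_pos y)]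
    nlinarith [sq_nonneg (v y), hm_upper y, hm_pos y]
  set Q : ℝ := ∫ x, (v x) ^ 2 * m x with hQ_def
  have hQ0 : 0 ≤ Q := integral_nonneg fun x => mul_nonneg (sq_nonneg _) (hm_pos x).le
  -- per-x integrability
  have hwy_meas : ∀ x : ℝ, Measurable fun y => w (x - y) := fun x =>
    hw_meas.comp (measurable_const.sub measurable_id)
  have hint1 : ∀ x, Integrable (fun y => w (x - y) * g y) := by
    intro x
    refine (hv2.const_mul (Cw * (B / 2))).mono'
      (((hwy_meas x).mul hg_meas).aestronglyMeasurable) (ae_of_all _ fun y => ?_)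
    rw [Real.norm_eq_abs, abs_mul, abs_of_nonneg (hw_nonneg _)]
    calc w (x - y) * |g y| ≤ Cw * (B / 2 * (v y) ^ 2) :=
          mul_le_mul (hCw _) (hg_bound y) (abs_nonneg _) hCw0
      _ = Cw * (B / 2) * (v y) ^ 2 := by ring
  have hint2 : ∀ x, Integrable (fun y => w (x - y) * (v y) ^ 2) := by
    intro x
    refine (hv2.const_mul Cw).mono'
      (((hwy_meas x).mul (hv_meas.pow_const 2)).aestronglyMeasurable)
      (ae_of_all _ fun y => ?_)
    rw [Real.norm_eq_abs, abs_mul, abs_of_nonneg (hw_nonneg _), abs_of_nonneg (sq_nonneg _)]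
    exact mul_le_mul_of_nonneg_right (hCw _) (sq_nonneg _)
  have hint3 : ∀ x, Integrable (fun y => w (x - y) * ((v y) ^ 2 * m y)) := by
    intro x
    refine (hq.const_mul Cw).mono'
      (((hwy_meas x).mul ((hv_meas.pow_const 2).mul hm_meas)).aestronglyMeasurable)
      (ae_of_all _ fun y => ?_)
    have h0 : 0 ≤ (v y) ^ 2 * m y := mul_nonneg (sq_nonneg _) (hm_pos y).le
    rw [Real.norm_eq_abs, abs_mul, abs_of_nonneg (hw_nonneg _), abs_of_nonneg h0]
    exact mul_le_mul_of_nonneg_right (hCw _) h0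
  set I : ℝ → ℝ := fun x => ∫ y, w (x - y) * (v y) ^ 2 with hI_def
  set J : ℝ → ℝ := fun x => ∫ y, w (x - y) * ((v y) ^ 2 * m y) with hJ_def
  have hI0 : ∀ x, 0 ≤ I x := fun x =>
    integral_nonneg fun y => mul_nonneg (hw_nonneg _) (sq_nonneg _)
  have hJ0 : ∀ x, 0 ≤ J x := fun x =>
    integral_nonneg fun y => mul_nonneg (hw_nonneg _) (mul_nonneg (sq_nonneg _) (hm_pos y).le)
  have hIbd1 : ∀ x, I x ≤ Cw / m₀ * Q := by
    intro x
    have hpt : ∀ y, w (x - y) * (v y) ^ 2 ≤ Cw / m₀ * ((v y) ^ 2 * m y) := by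
      intro y
      rw [div_mul_eq_mul_div, le_div_iff₀ hm₀]
      nlinarith [mul_le_mul_of_nonneg_right (hCw (x - y)) (mul_nonneg (sq_nonneg (v y)) hm₀.le),
        mul_le_mul_of_nonneg_left (hm_lower y) (mul_nonneg hCw0 (sq_nonneg (v y)))]
    calc I x ≤ ∫ y, Cw / m₀ * ((v y) ^ 2 * m y) :=
          integral_mono (hint2 x) (hq.const_mul _) hpt
      _ = Cw / m₀ * Q := by rw [integral_const_mul]
  have hIbd2 : ∀ x, I x ≤ 1 / m₀ * J x := by
    intro x
    have hpt : ∀ y, w (x - y) * (v y) ^ 2 ≤ 1 / m₀ * (w (x - y) * ((v y) ^ 2 * m y)) := by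
      intro y
      rw [div_mul_eq_mul_div, le_div_iff₀ hm₀]
      nlinarith [mul_nonneg (hw_nonneg (x - y)) (sq_nonneg (v y)), hm_lower y]
    calc I x ≤ ∫ y, 1 / m₀ * (w (x - y) * ((v y) ^ 2 * m y)) :=
          integral_mono (hint2 x) ((hint3 x).const_mul _) hpt
      _ = 1 / m₀ * J x := by rw [integral_const_mul]
  set R : ℝ → ℝ := fun x => ∫ y, w (x - y) * g y with hR_def
  have hR_abs : ∀ x, |R x| ≤ B / 2 * I x := by
    intro x
    calc |R x| ≤ ∫ y, |w (x - y) * g y| := by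
          simpa only [Real.norm_eq_abs] using
            norm_integral_le_integral_norm (μ := volume) (fun y => w (x - y) * g y)
      _ ≤ ∫ y, B / 2 * (w (x - y) * (v y) ^ 2) := by
          refine integral_mono (hint1 x).abs ((hint2 x).const_mul _) fun y => ?_
          rw [abs_mul, abs_of_nonneg (hw_nonneg _)]
          calc w (x - y) * |g y| ≤ w (x - y) * (B / 2 * (v y) ^ 2) :=
                mul_le_mul_of_nonneg_left (hg_bound y) (hw_nonneg _)
            _ = B / 2 * (w (x - y) * (v y) ^ 2) := by ring
      _ = B / 2 * I x := by rw [integral_const_mul]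
  -- product integrability and Fubini
  have hprod : Integrable (fun p : ℝ × ℝ => w (p.1 - p.2) * ((v p.2) ^ 2 * m p.2))
      (volume.prod volume) := by
    have := hq.convolution_integrand (ContinuousLinearMap.mul ℝ ℝ) hw_int
    simpa [ContinuousLinearMap.mul_apply', mul_comm] using this
  have hJ_int : Integrable J := hprod.integral_prod_left
  have hJ_val : ∫ x, J x = Q := by
    have hswap := integral_integral_swap
      (f := fun x y => w (x - y) * ((v y) ^ 2 * m y)) hprod
    rw [hJ_def]
    rw [hswap]
    have : ∀ y : ℝ, (∫ x, w (x - y) * ((v y) ^ 2 * m y))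
        = (v y) ^ 2 * m y := by
      intro y
      rw [integral_mul_const, integral_sub_right_eq_self w y, hw_prob, one_mul]
    simp_rw [this]
    exact hQ_def.symm
  set c : ℝ := B ^ 2 / 4 * (Cw / m₀) * Q * (1 / m₀) * m₁ with hc_def
  have key : ∀ x, (R x) ^ 2 * m x ≤ c * J x := by
    intro x
    have h1 : (R x) ^ 2 ≤ (B / 2 * I x) ^ 2 := by
      rw [← sq_abs (R x)]
      exact pow_le_pow_left₀ (abs_nonneg _) (hR_abs x) 2
    have h3 : I x * I x ≤ (Cw / m₀ * Q) * (1 / m₀ * J x) :=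
      mul_le_mul (hIbd1 x) (hIbd2 x) (hI0 x) (by positivity)
    have h4 : (R x) ^ 2 ≤ B ^ 2 / 4 * ((Cw / m₀ * Q) * (1 / m₀ * J x)) := by
      calc (R x) ^ 2 ≤ (B / 2 * I x) ^ 2 := h1
        _ = B ^ 2 / 4 * (I x * I x) := by ring
        _ ≤ B ^ 2 / 4 * ((Cw / m₀ * Q) * (1 / m₀ * J x)) := by
            exact mul_le_mul_of_nonneg_left h3 (by positivity)
    have hc0 : 0 ≤ B ^ 2 / 4 * ((Cw / m₀ * Q) * (1 / m₀ * J x)) := by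
      have := hJ0 x
      positivity
    calc (R x) ^ 2 * m x ≤ (B ^ 2 / 4 * ((Cw / m₀ * Q) * (1 / m₀ * J x))) * m x :=
          mul_le_mul_of_nonneg_right h4 (hm_pos x).le
      _ ≤ (B ^ 2 / 4 * ((Cw / m₀ * Q) * (1 / m₀ * J x))) * m₁ :=
          mul_le_mul_of_nonneg_left (hm_upper x) hc0
      _ = c * J x := by rw [hc_def]; ring
  have hR_meas : StronglyMeasurable R := by
    apply MeasureTheory.StronglyMeasurable.integral_prod_right
      (f := fun x y => w (x - y) * g y)
    exact (((hw_meas.comp (measurable_fst.sub measurable_snd)).mul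
      (hg_meas.comp measurable_snd)).stronglyMeasurable)
  have hLHS_int : Integrable (fun x => (R x) ^ 2 * m x) := by
    refine (hJ_int.const_mul c).mono'
      (((hR_meas.measurable.pow_const 2).mul hm_meas).aestronglyMeasurable) (ae_of_all _ fun x => ?_)
    rw [Real.norm_eq_abs, abs_of_nonneg (mul_nonneg (sq_nonneg _) (hm_pos x).le)]
    exact key x
  calc (∫ x, (R x) ^ 2 * m x) ≤ ∫ x, c * J x :=
        integral_mono hLHS_int (hJ_int.const_mul c) key
    _ = c * Q := by rw [integral_const_mul, hJ_val]
    _ = 1 / 4 * Cw * B ^ 2 * (m₁ / m₀ ^ 2) * Q ^ 2 := by rw [hc_def]; ring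
end

section
/- Let ρ : ℝ → (0,∞) be measurable with lim_{y→−∞} ρ(y) = 0 and suppose there exists L_ρ > 0 such that ρ(y) ≤ L_ρ ρ(x) whenever y ≤ x. Let w : ℝ → [0,∞) be measurable with ∫₀^∞ w(x)² dx > 0. Then (∫_ℝ w(x−y)² ρ(x) dx) / ρ(y)² → ∞ as y → −∞; more precisely, for every y, ∫_ℝ w(x−y)² ρ(x) dx ≥ ( ∫₀^∞ w(x)² dx / L_ρ ) · ρ(y), and hence the ratio tends to infinity as y → −∞. -/
open MeasureTheory Filter Set

/-- The quadratic rest term cannot be controlled in `L²(ρ)` when `ρ` vanishes at `−∞`: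
for every `y`, `∫ w(x−y)² ρ(x) dx ≥ ((∫₀^∞ w²)/L_ρ) ρ(y)`, and hence
`(∫ w(x−y)² ρ(x) dx)/ρ(y)² → ∞` as `y → −∞`. -/
theorem stmt_18
    (ρ : ℝ → ℝ) (hρ_meas : Measurable ρ) (hρ_pos : ∀ x, 0 < ρ x)
    (hρ_lim : Tendsto ρ atBot (nhds 0))
    (Lρ : ℝ) (hLρ : 0 < Lρ) (hmono : ∀ x y : ℝ, y ≤ x → ρ y ≤ Lρ * ρ x)
    (w : ℝ → ℝ) (hw_meas : Measurable w) (hw_nonneg : ∀ x, 0 ≤ w x)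
    (hw_pos : 0 < ∫ x in Ioi (0 : ℝ), (w x) ^ 2) :
    (∀ y : ℝ, ENNReal.ofReal ((∫ x in Ioi (0 : ℝ), (w x) ^ 2) / Lρ * ρ y) ≤
      ∫⁻ x, ENNReal.ofReal ((w (x - y)) ^ 2 * ρ x)) ∧
    Tendsto (fun y => (∫⁻ x, ENNReal.ofReal ((w (x - y)) ^ 2 * ρ x)) /
      ENNReal.ofReal ((ρ y) ^ 2)) atBot (nhds ⊤) := by
  set I : ℝ := ∫ x in Ioi (0 : ℝ), (w x) ^ 2 with hI
  have hI_int : IntegrableOn (fun x => (w x) ^ 2) (Ioi (0 : ℝ)) := by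
    by_contra h
    rw [hI, integral_undef h] at hw_pos
    exact lt_irrefl _ hw_pos
  -- translation invariance
  have htrans : ∀ y : ℝ, (∫⁻ x in Ioi y, ENNReal.ofReal ((w (x - y)) ^ 2)) =
      ∫⁻ x in Ioi (0 : ℝ), ENNReal.ofReal ((w x) ^ 2) := by
    intro y
    have hmap : Measure.map (· + y) (volume : Measure ℝ) = volume :=
      Measure.IsAddRightInvariant.map_add_right_eq_self y
    have hf : Measurable fun x : ℝ => ENNReal.ofReal ((w (x - y)) ^ 2) := by fun_prop
    calc (∫⁻ x in Ioi y, ENNReal.ofReal ((w (x - y)) ^ 2))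
        = ∫⁻ x in Ioi y, ENNReal.ofReal ((w (x - y)) ^ 2)
            ∂(Measure.map (· + y) volume) := by rw [hmap]
      _ = ∫⁻ x in ((· + y) ⁻¹' Ioi y), ENNReal.ofReal ((w (x + y - y)) ^ 2) :=
          setLIntegral_map measurableSet_Ioi hf (measurable_id.add_const y)
      _ = ∫⁻ x in Ioi (0 : ℝ), ENNReal.ofReal ((w x) ^ 2) := by
          congr 1
          · ext x; simp [Set.mem_Ioi]
          · funext x; rw [add_sub_cancel_right]
  have hkey : ∀ y : ℝ, ENNReal.ofReal (I / Lρ * ρ y) ≤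
      ∫⁻ x, ENNReal.ofReal ((w (x - y)) ^ 2 * ρ x) := by
    intro y
    have h1 : (∫⁻ x in Ioi y, ENNReal.ofReal ((w (x - y)) ^ 2 * ρ x)) ≤
        ∫⁻ x, ENNReal.ofReal ((w (x - y)) ^ 2 * ρ x) :=
      setLIntegral_le_lintegral _ _
    refine le_trans ?_ h1
    have h2 : (∫⁻ x in Ioi y, ENNReal.ofReal ((w (x - y)) ^ 2) * ENNReal.ofReal (ρ y / Lρ)) ≤
        ∫⁻ x in Ioi y, ENNReal.ofReal ((w (x - y)) ^ 2 * ρ x) := by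
      refine setLIntegral_mono_ae (by fun_prop) (ae_of_all _ fun x hx => ?_)
      rw [← ENNReal.ofReal_mul (by positivity)]
      refine ENNReal.ofReal_le_ofReal ?_
      have : ρ y / Lρ ≤ ρ x := by
        rw [div_le_iff₀ hLρ, mul_comm]
        exact hmono x y (le_of_lt hx)
      exact mul_le_mul_of_nonneg_left this (by positivity)
    refine le_trans ?_ h2
    have hf2 : Measurable fun x : ℝ => ENNReal.ofReal ((w (x - y)) ^ 2) := by fun_prop
    rw [lintegral_mul_const _ hf2, htrans y]
    have h3 : ENNReal.ofReal I ≤ ∫⁻ x in Ioi (0 : ℝ), ENNReal.ofReal ((w x) ^ 2) := by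
      rw [hI, ofReal_integral_eq_lintegral_ofReal hI_int (ae_of_all _ fun x => by positivity)]
    calc ENNReal.ofReal (I / Lρ * ρ y)
        = ENNReal.ofReal I * ENNReal.ofReal (ρ y / Lρ) := by
          rw [← ENNReal.ofReal_mul (le_of_lt hw_pos)]
          ring_nf
      _ ≤ (∫⁻ x in Ioi (0 : ℝ), ENNReal.ofReal ((w x) ^ 2)) * ENNReal.ofReal (ρ y / Lρ) :=
          mul_le_mul_left h3 _
  refine ⟨hkey, ?_⟩
  have hc : 0 < I / Lρ := div_pos hw_pos hLρ
  have hlow : ∀ y : ℝ, ENNReal.ofReal ((I / Lρ) / ρ y) ≤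
      (∫⁻ x, ENNReal.ofReal ((w (x - y)) ^ 2 * ρ x)) / ENNReal.ofReal ((ρ y) ^ 2) := by
    intro y
    have hρy := hρ_pos y
    have : ENNReal.ofReal ((I / Lρ) / ρ y) =
        ENNReal.ofReal (I / Lρ * ρ y) / ENNReal.ofReal ((ρ y) ^ 2) := by
      rw [← ENNReal.ofReal_div_of_pos (by positivity)]
      congr 1
      field_simp
    rw [this]
    exact ENNReal.div_le_div_right (hkey y) _
  refine tendsto_nhds_top_mono ?_ (Eventually.of_forall hlow)
  have hρ_nhdsWithin : Tendsto ρ atBot (nhdsWithin 0 (Ioi 0)) :=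
    tendsto_nhdsWithin_of_tendsto_nhds_of_eventually_within _ hρ_lim
      (Eventually.of_forall fun y => hρ_pos y)
  have hinv : Tendsto (fun y => (ρ y)⁻¹) atBot atTop :=
    tendsto_inv_nhdsGT_zero.comp hρ_nhdsWithin
  have hdiv : Tendsto (fun y => (I / Lρ) / ρ y) atBot atTop := by
    simpa [div_eq_mul_inv] using hinv.const_mul_atTop hc
  exact ENNReal.tendsto_ofReal_atTop.comp hdiv
end
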